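/- arXiv:0905.0602 — 6 statements merged into one kernel-verified Lean document; each statement's English description precedes it below -/
import Mathlib

section
/- Let A be an n×m genotype matrix. Then A admits a directed perfect phylogeny if, and only if, for each pair of columns i, j we have {01,10,11} ⊄ ind^A(i,j), and for each column i the resolution graph G_i contains no cycle of odd total weight. -/
/-- A pair of haplotypes `h`, `h'` explains a genotype `g`:
entries `0`/`1` are copied, and at `2`-entries the haplotypes differ. -/
def ExplainsRow {m : ℕ} (h h' : Fin m → Bool) (g : Fin m → Fin 3) : Prop :=
  ∀ j : Fin m,
    (g j = 0 → h j = false ∧ h' j = false) ∧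
    (g j = 1 → h j = true ∧ h' j = true) ∧
    (g j = 2 → h j ≠ h' j)

/-- A `2n × m` haplotype matrix, given by its odd rows `B₁` and even rows `B₂`,
explains an `n × m` genotype matrix `A`. -/
def Explains {n m : ℕ} (B₁ B₂ : Fin n → Fin m → Bool) (A : Fin n → Fin m → Fin 3) : Prop :=
  ∀ r : Fin n, ExplainsRow (B₁ r) (B₂ r) (A r)

/-- The induced set `ind^B(i,j)` of a haplotype matrix: all pairs `xy` appearing
in columns `i` and `j` in some row of `B`. -/
def indB {n m : ℕ} (B₁ B₂ : Fin n → Fin m → Bool) (i j : Fin m) : Set (Bool × Bool) :=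
  {p | ∃ r : Fin n, (B₁ r i = p.1 ∧ B₁ r j = p.2) ∨ (B₂ r i = p.1 ∧ B₂ r j = p.2)}

/-- The three gamete property: `{01,10,11}` is never a subset of an induced set. -/
def ThreeGamete {n m : ℕ} (B₁ B₂ : Fin n → Fin m → Bool) : Prop :=
  ∀ i j : Fin m,
    ¬ (({(false, true), (true, false), (true, true)} : Set (Bool × Bool)) ⊆ indB B₁ B₂ i j)

/-- The four gamete property: no induced set equals `{00,01,10,11}`. -/
def FourGamete {n m : ℕ} (B₁ B₂ : Fin n → Fin m → Bool) : Prop :=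
  ∀ i j : Fin m,
    indB B₁ B₂ i j ≠
      ({(false, false), (false, true), (true, false), (true, true)} : Set (Bool × Bool))

/-- A genotype matrix admits a directed perfect phylogeny if some explaining
haplotype matrix satisfies the three gamete property. -/
def AdmitsDirectedPP {n m : ℕ} (A : Fin n → Fin m → Fin 3) : Prop :=
  ∃ B₁ B₂ : Fin n → Fin m → Bool, Explains B₁ B₂ A ∧ ThreeGamete B₁ B₂

/-- A genotype matrix admits a perfect phylogeny if some explaining
haplotype matrix satisfies the four gamete property. -/
def AdmitsPP {n m : ℕ} (A : Fin n → Fin m → Fin 3) : Prop :=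
  ∃ B₁ B₂ : Fin n → Fin m → Bool, Explains B₁ B₂ A ∧ FourGamete B₁ B₂

/-- Encode a haplotype entry as a genotype entry. -/
def boolToFin3 (b : Bool) : Fin 3 := if b then 1 else 0

/-- The induced set `ind^A(i,j)` of a genotype matrix. -/
def indA {n m : ℕ} (A : Fin n → Fin m → Fin 3) (i j : Fin m) : Set (Bool × Bool) :=
  {p | ∃ r : Fin n,
    (A r i = boolToFin3 p.1 ∧ A r j = boolToFin3 p.2) ∨
    (A r i = boolToFin3 p.1 ∧ A r j = 2) ∨
    (A r i = 2 ∧ A r j = boolToFin3 p.2)}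

/-- Column `i` of `A` is greater than column `j` (written `i ≻^A j`):
`ind^A(i,j) ⊆ {00,10,11}` and the two columns are not identical. -/
def ColGreater {n m : ℕ} (A : Fin n → Fin m → Fin 3) (i j : Fin m) : Prop :=
  indA A i j ⊆ ({(false, false), (true, false), (true, true)} : Set (Bool × Bool)) ∧
  ∃ r : Fin n, A r i ≠ A r j

/-- The set `A_i`: rows `g` of `A` with `g[i] = 2` such that `i` is `≻^A`-maximal
among the `2`-columns of `g` and has the least index among all such maximal columns. -/
def rowSet {n m : ℕ} (A : Fin n → Fin m → Fin 3) (i : Fin m) : Set (Fin n) :=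
  {r | A r i = 2 ∧
    (∀ j : Fin m, j ≠ i → A r j = 2 → ¬ ColGreater A j i) ∧
    (∀ j : Fin m, j ≠ i →
      (A r j = 2 ∧ ∀ k : Fin m, k ≠ j → A r k = 2 → ¬ ColGreater A k j) → i < j)}

/-- `k` is a vertex of the resolution graph `G_i`. -/
def resVert {n m : ℕ} (A : Fin n → Fin m → Fin 3) (i k : Fin m) : Prop :=
  ∃ r ∈ rowSet A i, A r k = 2

/-- The weighted edges of the resolution graph `G_i`: an edge `{k,l}` of weight `0`
or weight `1`, as prescribed by the construction of resolution graphs. -/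
def resEdge {n m : ℕ} (A : Fin n → Fin m → Fin 3) (i : Fin m) (k l : Fin m) (w : ℕ) : Prop :=
  k ≠ l ∧ (∃ r ∈ rowSet A i, A r k = 2 ∧ A r l = 2) ∧
  ((w = 0 ∧
      (((true, true) : Bool × Bool) ∈ indA A k l ∨
        ∃ j : Fin m, j ≠ i ∧ ∃ r₂ ∈ rowSet A j, A r₂ k = 2 ∧ A r₂ l = 2)) ∨
   (w = 1 ∧ ({(false, true), (true, false)} : Set (Bool × Bool)) ⊆ indA A k l))

/-- An edge-weighted graph, given as a relation `E u v w` ("there is an edge between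
`u` and `v` of weight `w`"), contains a cycle of odd total weight: a closed sequence of
pairwise distinct vertices joined by pairwise distinct weighted edges whose weights
sum to an odd number. -/
def HasOddWeightCycle {V : Type*} (E : V → V → ℕ → Prop) : Prop :=
  ∃ (p : ℕ) (c : Fin (p + 1) → V) (w : Fin (p + 1) → ℕ),
    Function.Injective c ∧
    (∀ t : Fin (p + 1), E (c t) (c (t + 1)) (w t)) ∧
    Function.Injective (fun t : Fin (p + 1) => (Sym2.mk (c t, c (t + 1)), w t)) ∧
    Odd (∑ t, w t)


section Walks
variable {V : Type*}

/-- Walk along weighted edge relation `E` from `a` through steps `l` ending at `b`. -/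
def LW (E : V → V → ℕ → Prop) : V → List (V × ℕ) → V → Prop
  | a, [], b => a = b
  | a, s :: t, b => E a s.1 s.2 ∧ LW E s.1 t b

def wsum (l : List (V × ℕ)) : ℕ := (l.map Prod.snd).sum

variable {E : V → V → ℕ → Prop}

lemma LW_append {a c b : V} {l₁ l₂ : List (V × ℕ)} (h₁ : LW E a l₁ c) (h₂ : LW E c l₂ b) :
    LW E a (l₁ ++ l₂) b := by
  induction l₁ generalizing a with
  | nil => cases h₁; simpa using h₂
  | cons s t ih => exact ⟨h₁.1, ih h₁.2⟩

lemma wsum_append (l₁ l₂ : List (V × ℕ)) : wsum (l₁ ++ l₂) = wsum l₁ + wsum l₂ := by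
  simp [wsum]

lemma LW_reverse (hsym : ∀ k l w, E k l w → E l k w) {a b : V} {l : List (V × ℕ)}
    (h : LW E a l b) : ∃ l', LW E b l' a ∧ wsum l' = wsum l ∧ l'.length = l.length := by
  induction l generalizing a with
  | nil => cases h; exact ⟨[], rfl, rfl, rfl⟩
  | cons s t ih =>
    obtain ⟨l', hl', hw, hlen⟩ := ih h.2
    refine ⟨l' ++ [(a, s.2)], LW_append hl' ⟨hsym _ _ _ h.1, rfl⟩, ?_, by simp [hlen]⟩
    simp only [wsum, List.map_append, List.sum_append] at hw ⊢; simp [hw]; omega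

/-- Cut a walk at an explicit decomposition of its vertex list. -/
lemma LW_cut {a b : V} {l : List (V × ℕ)} (h : LW E a l b) :
    ∀ (v₁ v₂ : List V) (x : V), a :: l.map Prod.fst = v₁ ++ x :: v₂ →
    ∃ l₁ l₂, l = l₁ ++ l₂ ∧ l₁.length = v₁.length ∧ LW E a l₁ x ∧ LW E x l₂ b := by
  induction l generalizing a with
  | nil =>
    rintro v₁ v₂ x hv
    rcases v₁ with _ | ⟨y, v₁⟩
    · simp at hv
      exact ⟨[], [], by simp, by simp, hv.1.symm ▸ rfl, hv.1 ▸ h⟩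
    · simp at hv
  | cons s t ih =>
    rintro v₁ v₂ x hv
    rcases v₁ with _ | ⟨y, v₁⟩
    · simp at hv
      exact ⟨[], s :: t, rfl, rfl, hv.1.symm ▸ rfl, hv.1 ▸ h⟩
    · simp only [List.cons_append, List.cons.injEq] at hv
      obtain ⟨l₁, l₂, hl, hlen, h1, h2⟩ := ih h.2 v₁ v₂ x hv.2
      exact ⟨s :: l₁, l₂, by simp [hl], by simp [hlen], ⟨h.1, h1⟩, h2⟩

lemma not_nodup_decomp {α : Type*} {L : List α} (h : ¬ L.Nodup) :
    ∃ (m₁ m₂ m₃ : List α) (x : α), L = m₁ ++ x :: m₂ ++ x :: m₃ := by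
  induction L with
  | nil => simp at h
  | cons a t ih =>
    by_cases ha : a ∈ t
    · obtain ⟨m₂, m₃, rfl⟩ := List.append_of_mem ha
      exact ⟨[], m₂, m₃, a, by simp⟩
    · have : ¬ t.Nodup := fun hn => h (List.nodup_cons.2 ⟨ha, hn⟩)
      obtain ⟨m₁, m₂, m₃, x, rfl⟩ := ih this
      exact ⟨a :: m₁, m₂, m₃, x, by simp⟩















lemma LW_get {a b : V} {l : List (V × ℕ)} (h : LW E a l b) :
    ∀ (t : ℕ) (ht : t < l.length),
      E ((a :: l.map Prod.fst)[t]'(by simp; omega))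
        ((a :: l.map Prod.fst)[t+1]'(by simp; omega))
        ((l.map Prod.snd)[t]'(by simpa using ht)) := by
  induction l generalizing a with
  | nil => intro t ht; simp at ht
  | cons s rest ih =>
    intro t ht
    match t with
    | 0 => simpa using h.1
    | (r+1) =>
      have := ih h.2 r (by simpa using ht)
      simpa using this

lemma LW_last {a b : V} {l : List (V × ℕ)} (h : LW E a l b) :
    (a :: l.map Prod.fst).getLast (by simp) = b := by
  induction l generalizing a with
  | nil => simpa using (show a = b from h)
  | cons s rest ih =>
    have := ih h.2
    rw [List.getLast_cons (by simp)]
    exact this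

end Walks
section Main
variable {V : Type*} {E : V → V → ℕ → Prop}

lemma LW_append' {a c b : V} {l₁ l₂ : List (V × ℕ)} (h₁ : LW E a l₁ c) (h₂ : LW E c l₂ b) :
    LW E a (l₁ ++ l₂) b := by
  induction l₁ generalizing a with
  | nil => cases h₁; simpa using h₂
  | cons s t ih => exact ⟨h₁.1, ih h₁.2⟩

theorem nodup_closed_cycle (hirr : ∀ a w, ¬ E a a w)
    (hww : ∀ k l w, E k l w → w = 0 ∨ w = 1)
    {a : V} {l : List (V × ℕ)} (hne : l ≠ []) (h : LW E a l a)
    (hodd : Odd (wsum l))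
    (hnd : ((a :: l.map Prod.fst).dropLast).Nodup) : HasOddWeightCycle E := by
  classical
  set VL := a :: l.map Prod.fst with hVL
  set M := VL.dropLast with hMdef
  have hVLlen : VL.length = l.length + 1 := by simp [hVL]
  have hMlen : M.length = l.length := by simp [hMdef, hVLlen]
  -- length ≥ 2
  have hq1 : 1 ≤ l.length := by
    cases l with
    | nil => exact absurd rfl hne
    | cons s t => simp
  have hq2 : 2 ≤ l.length := by
    rcases l with _ | ⟨s, _ | ⟨s', t⟩⟩
    · exact absurd rfl hne
    · exfalso
      obtain ⟨he, hs⟩ := h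
      have hz : s.1 = a := hs
      rw [hz] at he
      exact hirr _ _ he
    · simp
  obtain ⟨p, hp⟩ : ∃ p, l.length = p + 1 := ⟨l.length - 1, by omega⟩
  have hp1 : 1 ≤ p := by omega
  have hMp : M.length = p + 1 := by omega
  have hval1 : ((1 : Fin (p+1)) : ℕ) = 1 := by
    rw [Fin.val_one']
    exact Nat.mod_eq_of_lt (by omega)
  set c : Fin (p+1) → V := fun t => M[(t : ℕ)]'(by omega) with hc
  set wf : Fin (p+1) → ℕ := fun t => (l.map Prod.snd)[(t : ℕ)]'(by simp; omega) with hwf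
  have hcV : ∀ (t : Fin (p+1)), c t = VL[(t:ℕ)]'(by omega) := by
    intro t
    simp only [hc]
    exact List.getElem_dropLast _
  have hgetlast : VL[l.length]'(by omega) = a := by
    have h1 := LW_last h
    rw [List.getLast_eq_getElem] at h1
    simpa [hVLlen] using h1
  -- the cyclic edge property
  have hedge : ∀ t : Fin (p+1), E (c t) (c (t + 1)) (wf t) := by
    intro t
    have hlt : (t : ℕ) < l.length := by omega
    have hstep := LW_get h (t : ℕ) hlt
    have h1 : c t = VL[(t:ℕ)]'(by omega) := hcV t
    rcases Nat.lt_or_ge ((t : ℕ) + 1) (p + 1) with hlt2 | hge2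
    · have hsucc : ((t + 1 : Fin (p+1)) : ℕ) = (t : ℕ) + 1 := by
        rw [Fin.add_def, hval1]
        exact Nat.mod_eq_of_lt (by omega)
      have h2 : c (t + 1) = VL[(t:ℕ)+1]'(by omega) := by
        have e1 : c (t+1) = M[((t+1 : Fin (p+1)) : ℕ)]'(by omega) := rfl
        rw [e1]
        have e2 : M[((t+1 : Fin (p+1)) : ℕ)]'(by omega) = M[(t:ℕ)+1]'(by omega) := by
          congr 1
        rw [e2]
        exact List.getElem_dropLast _
      rw [h1, h2]; exact hstep
    · -- t = p, wraps to 0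
      have htp : (t : ℕ) = p := by omega
      have hsucc : ((t + 1 : Fin (p+1)) : ℕ) = 0 := by
        rw [Fin.add_def, hval1, htp]
        exact Nat.mod_self _
      have h2 : c (t + 1) = VL[0]'(by omega) := by
        have e1 : c (t+1) = M[((t+1 : Fin (p+1)) : ℕ)]'(by omega) := rfl
        rw [e1]
        have e2 : M[((t+1 : Fin (p+1)) : ℕ)]'(by omega) = M[0]'(by omega) := by
          congr 1
        rw [e2]
        exact List.getElem_dropLast _
      have h3 : VL[(t:ℕ)+1]'(by omega) = a := by
        have : (t:ℕ)+1 = l.length := by omega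
        simp only [this]; exact hgetlast
      have h4 : VL[0]'(by omega) = a := by simp [hVL]
      have h5 : (a :: List.map Prod.fst l)[(t:ℕ)+1]'(by simp; omega) = a := h3
      rw [h5] at hstep
      rw [h1, h2, h4]; exact hstep
  have hcinj : Function.Injective c := by
    intro t u htu
    have hinj := List.nodup_iff_injective_get.1 hnd
    have : M.get ⟨(t:ℕ), by omega⟩ = M.get ⟨(u:ℕ), by omega⟩ := htu
    have := hinj this
    exact Fin.ext (by simpa using congrArg Fin.val this)
  have hsum : ∑ t, wf t = wsum l := by
    have hlen2 : (l.map Prod.snd).length = p + 1 := by simp; omega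
    rw [wsum, ← Fin.sum_univ_getElem]
    exact Fintype.sum_equiv (finCongr hlen2.symm) wf _ (fun t => rfl)
  refine ⟨p, c, wf, hcinj, hedge, ?_, by rwa [hsum]⟩
  -- injectivity of edges
  intro t u heq
  simp only [Prod.mk.injEq, Sym2.mk_eq_mk_iff, Prod.mk.injEq, Prod.swap_prod_mk] at heq
  obtain ⟨hs, hwe⟩ := heq
  have h := congrFun hs (c t, c (t + 1))
  rcases Sym2.eq_iff.1 h with ⟨h1, -⟩ | ⟨-, h1⟩ <;> exact hcinj (congrArg Prod.fst h1)
end Main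

section Main2
variable {V : Type*} {E : V → V → ℕ → Prop}

theorem no_odd_closed (hsym : ∀ k l w, E k l w → E l k w)
    (hirr : ∀ a w, ¬ E a a w)
    (hww : ∀ k l w, E k l w → w = 0 ∨ w = 1)
    (hno : ¬ HasOddWeightCycle E) :
    ∀ (N : ℕ) (l : List (V × ℕ)) (a : V), l.length ≤ N → LW E a l a → ¬ Odd (wsum l) := by
  intro N
  induction N with
  | zero =>
    intro l a hlen _ hodd
    have : l = [] := List.length_eq_zero_iff.1 (by omega)
    subst this
    simp [wsum] at hodd
  | succ N ih =>
    intro l a hlen h hodd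
    by_cases hne : l = []
    · subst hne
      simp [wsum] at hodd
    by_cases hnd : ((a :: l.map Prod.fst).dropLast).Nodup
    · exact hno (nodup_closed_cycle hirr hww hne h hodd hnd)
    · obtain ⟨m₁, m₂, m₃, x, hM⟩ := not_nodup_decomp hnd
      have hVLlast : (a :: l.map Prod.fst).getLast (by simp) = a := LW_last h
      have hVL : a :: l.map Prod.fst = m₁ ++ x :: (m₂ ++ x :: (m₃ ++ [a])) := by
        conv_lhs => rw [← List.dropLast_append_getLast (l := a :: l.map Prod.fst) (by simp)]
        rw [hM, hVLlast]
        simp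
      obtain ⟨l₁, l₂, hl12, hlen1, hw1, hw2⟩ := LW_cut h m₁ _ x hVL
      have hmap : x :: l₂.map Prod.fst = (x :: m₂) ++ x :: (m₃ ++ [a]) := by
        have e1 : a :: l.map Prod.fst = (a :: l₁.map Prod.fst) ++ l₂.map Prod.fst := by
          rw [hl12]; simp
        have e2 : a :: l.map Prod.fst = (m₁ ++ [x]) ++ (m₂ ++ x :: (m₃ ++ [a])) := by
          rw [hVL]; simp
        have hlen' : (a :: l₁.map Prod.fst).length = (m₁ ++ [x]).length := by
          simp [hlen1]
        have := List.append_inj (e1.symm.trans e2) (by simpa using hlen')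
        rw [this.2]
        simp
      obtain ⟨l₃, l₄, hl34, hlen3, hw3, hw4⟩ := LW_cut hw2 (x :: m₂) _ x hmap
      have hlen3' : l₃.length = m₂.length + 1 := by simpa using hlen3
      -- middle closed walk : LW x l₃ x ; outer : LW a (l₁ ++ l₄) a
      have houter : LW E a (l₁ ++ l₄) a := LW_append hw1 hw4
      have hlen4 : l₄.length = m₃.length + 1 := by
        have h5 : (x :: l₂.map Prod.fst).length = ((x :: m₂) ++ x :: (m₃ ++ [a])).length := by
          rw [hmap]
        rw [hl34] at h5
        simp at h5
        omega
      have hlensum : l.length = l₁.length + l₃.length + l₄.length := by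
        rw [hl12, hl34]; simp; omega
      have hsumsplit : wsum l = wsum l₃ + (wsum l₁ + wsum l₄) := by
        rw [hl12, hl34, wsum_append, wsum_append]
        omega
      have hl3len : l₃.length ≤ N := by omega
      have hl14len : (l₁ ++ l₄).length ≤ N := by simp; omega
      rcases Nat.even_or_odd (wsum l₃) with he3 | ho3
      · have : Odd (wsum l₁ + wsum l₄) := by
          rw [hsumsplit] at hodd
          rcases he3 with ⟨k, hk⟩
          rcases hodd with ⟨k2, hk2⟩
          exact ⟨k2 - k, by omega⟩
        exact ih (l₁ ++ l₄) a hl14len houter (by rwa [wsum_append])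
      · exact ih l₃ x hl3len hw3 ho3

theorem parity_exists [Fintype V] [LinearOrder V]
    (hsym : ∀ k l w, E k l w → E l k w)
    (hirr : ∀ a w, ¬ E a a w)
    (hww : ∀ k l w, E k l w → w = 0 ∨ w = 1)
    (hno : ¬ HasOddWeightCycle E) :
    ∃ s : V → Bool, ∀ k l w, E k l w → ((s k ≠ s l) ↔ w = 1) := by
  classical
  -- reachability
  set R : V → V → Prop := fun u v => ∃ l, LW E u l v with hR
  have hRrefl : ∀ v, R v v := fun v => ⟨[], rfl⟩
  have hRtrans : ∀ u v z, R u v → R v z → R u z := by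
    rintro u v z ⟨l₁, h₁⟩ ⟨l₂, h₂⟩
    exact ⟨l₁ ++ l₂, LW_append h₁ h₂⟩
  have hRsymm : ∀ u v, R u v → R v u := by
    rintro u v ⟨l, hl⟩
    obtain ⟨l', hl', -, -⟩ := LW_reverse hsym hl
    exact ⟨l', hl'⟩
  set S : V → Finset V := fun v => Finset.univ.filter (fun u => R u v) with hS
  have hSne : ∀ v, (S v).Nonempty := fun v => ⟨v, by simp [hS, hRrefl v]⟩
  set base : V → V := fun v => (S v).min' (hSne v) with hbase
  have hbaseR : ∀ v, R (base v) v := by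
    intro v
    have h2 : base v ∈ S v := (S v).min'_mem (hSne v)
    simp only [hS, Finset.mem_filter, Finset.mem_univ, true_and] at h2
    exact h2
  -- parity uniqueness
  have huniq : ∀ (b v : V) (l₁ l₂ : List (V × ℕ)), LW E b l₁ v → LW E b l₂ v →
      (Odd (wsum l₁) ↔ Odd (wsum l₂)) := by
    intro b v l₁ l₂ h₁ h₂
    by_contra hcon
    obtain ⟨l₂', h₂', hw2', -⟩ := LW_reverse hsym h₂
    have hclosed : LW E b (l₁ ++ l₂') b := LW_append h₁ h₂'
    have hoddc : Odd (wsum (l₁ ++ l₂')) := by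
      rw [wsum_append, hw2']
      rcases Nat.even_or_odd (wsum l₁) with he | ho
      · have hno1 : ¬ Odd (wsum l₁) := Nat.not_odd_iff_even.2 he
        have ho2 : Odd (wsum l₂) := by tauto
        rcases he with ⟨k, hk⟩; rcases ho2 with ⟨k2, hk2⟩
        exact ⟨k + k2, by omega⟩
      · have he2 : ¬ Odd (wsum l₂) := by tauto
        rw [Nat.not_odd_iff_even] at he2
        rcases ho with ⟨k, hk⟩; rcases he2 with ⟨k2, hk2⟩
        exact ⟨k + k2, by omega⟩
    exact no_odd_closed hsym hirr hww hno _ _ b le_rfl hclosed hoddc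
  set s : V → Bool := fun v => decide (∃ l, LW E (base v) l v ∧ Odd (wsum l)) with hs
  refine ⟨s, ?_⟩
  intro k l w he
  have hRkl : R k l := ⟨[(l, w)], he, rfl⟩
  have hSeq : S k = S l := by
    ext u
    simp only [hS, Finset.mem_filter, Finset.mem_univ, true_and]
    exact ⟨fun h => hRtrans _ _ _ h hRkl, fun h => hRtrans _ _ _ h (hRsymm _ _ hRkl)⟩
  have hbeq : base k = base l := by simp [hbase, hSeq]
  obtain ⟨l₀, hl₀⟩ := hbaseR k
  have hwalkl : LW E (base l) (l₀ ++ [(l, w)]) l := by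
    rw [← hbeq]
    exact LW_append hl₀ ⟨he, rfl⟩
  have hsk : s k = decide (Odd (wsum l₀)) := by
    simp only [hs]
    by_cases ho : Odd (wsum l₀)
    · simp [ho]
      exact ⟨l₀, hl₀, ho⟩
    · simp [ho]
      intro l' hl'
      rw [← Nat.not_odd_iff_even]
      intro ho'
      exact ho ((huniq _ _ _ _ hl' hl₀).1 ho')
  have hsl : s l = decide (Odd (wsum l₀ + w)) := by
    simp only [hs]
    by_cases ho : Odd (wsum l₀ + w)
    · simp [ho]
      refine ⟨l₀ ++ [(l, w)], hwalkl, ?_⟩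
      rwa [wsum_append]
      -- wsum [(l,w)] = w
    · simp [ho]
      intro l' hl'
      rw [← Nat.not_odd_iff_even]
      intro ho'
      refine ho ?_
      have := (huniq _ _ _ _ hl' hwalkl).1 ho'
      rwa [wsum_append] at this
  rcases hww _ _ _ he with rfl | rfl
  · constructor
    · intro hne
      exfalso
      rw [hsk, hsl] at hne
      simp at hne
    · intro h01
      exact absurd h01 (by norm_num)
  · constructor
    · intro _; rfl
    · intro _
      rw [hsk, hsl]
      by_cases ho : Odd (wsum l₀)
      · have : ¬ Odd (wsum l₀ + 1) := by
          rcases ho with ⟨k2, hk⟩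
          rw [Nat.not_odd_iff_even]
          exact ⟨k2 + 1, by omega⟩
        simp [ho, this]
      · have : Odd (wsum l₀ + 1) := by
          rw [Nat.not_odd_iff_even] at ho
          rcases ho with ⟨k2, hk⟩
          exact ⟨k2, by omega⟩
        simp [ho, this]
end Main2

section Basics
variable {n m : ℕ} {A : Fin n → Fin m → Fin 3} {B₁ B₂ : Fin n → Fin m → Bool}

lemma fin3_cases (a : Fin 3) : a = 0 ∨ a = 1 ∨ a = 2 := by fin_cases a <;> simp

lemma boolToFin3_ne_two (b : Bool) : boolToFin3 b ≠ 2 := by cases b <;> simp [boolToFin3]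

lemma explains_bval (hE : Explains B₁ B₂ A) (r : Fin n) (c : Fin m) (b : Bool)
    (h : A r c = boolToFin3 b) : B₁ r c = b ∧ B₂ r c = b := by
  cases b
  · exact ((hE r c).1 h)
  · exact ((hE r c).2.1 h)

lemma explains_ne2 (hE : Explains B₁ B₂ A) (r : Fin n) (c : Fin m)
    (h : A r c ≠ 2) : A r c = boolToFin3 (B₁ r c) ∧ B₂ r c = B₁ r c := by
  rcases fin3_cases (A r c) with h0 | h1 | h2
  · have := (hE r c).1 h0
    rw [this.1, this.2, h0]; simp [boolToFin3]
  · have := (hE r c).2.1 h1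
    rw [this.1, this.2, h1]; simp [boolToFin3]
  · exact absurd h2 h

lemma explains_two (hE : Explains B₁ B₂ A) (r : Fin n) (c : Fin m)
    (h : A r c = 2) : B₂ r c = ! B₁ r c := by
  have := (hE r c).2.2 h
  cases h1 : B₁ r c <;> cases h2 : B₂ r c <;> simp_all

lemma indA_sub_indB (hE : Explains B₁ B₂ A) (i j : Fin m) :
    indA A i j ⊆ indB B₁ B₂ i j := by
  rintro ⟨x, y⟩ ⟨r, hr⟩
  rcases hr with ⟨hi, hj⟩ | ⟨hi, hj⟩ | ⟨hi, hj⟩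
  · exact ⟨r, Or.inl ⟨(explains_bval hE r i x hi).1, (explains_bval hE r j y hj).1⟩⟩
  · have h1 := explains_bval hE r i x hi
    by_cases hb : B₁ r j = y
    · exact ⟨r, Or.inl ⟨h1.1, hb⟩⟩
    · refine ⟨r, Or.inr ⟨h1.2, ?_⟩⟩
      have := explains_two hE r j hj
      cases y <;> simp_all
  · have h1 := explains_bval hE r j y hj
    by_cases hb : B₁ r i = x
    · exact ⟨r, Or.inl ⟨hb, h1.1⟩⟩
    · refine ⟨r, Or.inr ⟨?_, h1.2⟩⟩
      have := explains_two hE r i hi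
      cases x <;> simp_all

lemma indA_swap {i j : Fin m} {x y : Bool} :
    (x, y) ∈ indA A i j ↔ (y, x) ∈ indA A j i := by
  constructor <;>
  · rintro ⟨r, hr⟩
    exact ⟨r, by tauto⟩

lemma indB_swap {i j : Fin m} {x y : Bool} :
    (x, y) ∈ indB B₁ B₂ i j ↔ (y, x) ∈ indB B₁ B₂ j i := by
  constructor <;>
  · rintro ⟨r, hr⟩
    exact ⟨r, by tauto⟩

lemma tg_three (hT : ThreeGamete B₁ B₂) (i j : Fin m) :
    ¬ ((false, true) ∈ indB B₁ B₂ i j ∧ (true, false) ∈ indB B₁ B₂ i j ∧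
       (true, true) ∈ indB B₁ B₂ i j) := by
  rintro ⟨h1, h2, h3⟩
  refine hT i j ?_
  intro p hp
  simp only [Set.mem_insert_iff, Set.mem_singleton_iff] at hp
  rcases hp with rfl | rfl | rfl <;> assumption

/-- A common membership: a row with both entries 2, same-resolved. -/
lemma same_mem (hE : Explains B₁ B₂ A) {r : Fin n} {x y : Fin m}
    (hx : A r x = 2) (hy : A r y = 2) (hs : B₁ r x = B₁ r y) :
    (true, true) ∈ indB B₁ B₂ x y ∧ (false, false) ∈ indB B₁ B₂ x y := by
  have h2x := explains_two hE r x hx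
  have h2y := explains_two hE r y hy
  cases hb : B₁ r x
  · exact ⟨⟨r, Or.inr ⟨by simp_all, by simp_all⟩⟩, ⟨r, Or.inl ⟨by simp_all, by simp_all⟩⟩⟩
  · exact ⟨⟨r, Or.inl ⟨by simp_all, by simp_all⟩⟩, ⟨r, Or.inr ⟨by simp_all, by simp_all⟩⟩⟩

lemma opp_mem (hE : Explains B₁ B₂ A) {r : Fin n} {x y : Fin m}
    (hx : A r x = 2) (hy : A r y = 2) (hs : B₁ r x ≠ B₁ r y) :
    (false, true) ∈ indB B₁ B₂ x y ∧ (true, false) ∈ indB B₁ B₂ x y := by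
  have h2x := explains_two hE r x hx
  have h2y := explains_two hE r y hy
  cases hb : B₁ r x
  · exact ⟨⟨r, Or.inl ⟨by simp_all, by simp_all⟩⟩, ⟨r, Or.inr ⟨by simp_all, by simp_all⟩⟩⟩
  · exact ⟨⟨r, Or.inr ⟨by simp_all, by simp_all⟩⟩, ⟨r, Or.inl ⟨by simp_all, by simp_all⟩⟩⟩

end Basics


section ColG
variable {n m : ℕ} {A : Fin n → Fin m → Fin 3}

lemma colGreater_iff {x y : Fin m} :
    ColGreater A x y ↔ ((false, true) ∉ indA A x y ∧ ∃ r, A r x ≠ A r y) := by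
  constructor
  · rintro ⟨hsub, hdiff⟩
    refine ⟨fun hmem => ?_, hdiff⟩
    have := hsub hmem
    simp at this
  · rintro ⟨hmem, hdiff⟩
    refine ⟨?_, hdiff⟩
    rintro ⟨px, py⟩ hp
    match px, py with
    | false, false => simp
    | false, true => exact absurd hp hmem
    | true, false => simp
    | true, true => simp

lemma noMix {x y : Fin m} (h01 : (false, true) ∉ indA A x y)
    (h10 : (true, false) ∉ indA A x y) : ∀ r, A r x = A r y := by
  intro r
  rcases fin3_cases (A r x) with hx | hx | hx <;>
    rcases fin3_cases (A r y) with hy | hy | hy <;>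
      simp only [hx, hy]
  · exact absurd ⟨r, Or.inl ⟨hx, hy⟩⟩ h01
  · exact absurd ⟨r, Or.inr (Or.inl ⟨hx, hy⟩)⟩ h01
  · exact absurd ⟨r, Or.inl ⟨hx, hy⟩⟩ h10
  · exact absurd ⟨r, Or.inr (Or.inl ⟨hx, hy⟩)⟩ h10
  · exact absurd ⟨r, Or.inr (Or.inr ⟨hx, hy⟩)⟩ h10
  · exact absurd ⟨r, Or.inr (Or.inr ⟨hx, hy⟩)⟩ h01

lemma colGreater_antisymm {x y : Fin m} (h1 : ColGreater A x y) (h2 : ColGreater A y x) :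
    False := by
  rw [colGreater_iff] at h1 h2
  have h10 : (true, false) ∉ indA A x y := fun hm => h2.1 (indA_swap.1 hm)
  obtain ⟨r, hr⟩ := h1.2
  exact hr (noMix h1.1 h10 r)

lemma colGreater_irrefl (x : Fin m) : ¬ ColGreater A x x := by
  rintro ⟨-, r, hr⟩
  exact hr rfl

lemma indA_congr {x y z : Fin m} (h : ∀ r, A r x = A r y) :
    indA A z x = indA A z y := by
  ext ⟨px, py⟩
  constructor <;>
  · rintro ⟨r, hr⟩
    refine ⟨r, ?_⟩
    first
    | (rcases hr with h1 | h1 | h1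
       · exact Or.inl ⟨h1.1, by rw [← h r] at *; exact h1.2⟩
       · exact Or.inr (Or.inl ⟨h1.1, by rw [← h r] at *; exact h1.2⟩)
       · exact Or.inr (Or.inr ⟨h1.1, by rw [← h r] at *; exact h1.2⟩))

lemma colGreater_trans {x y z : Fin m} (h1 : ColGreater A x y) (h2 : ColGreater A y z) :
    ColGreater A x z := by
  rw [colGreater_iff] at h1 h2 ⊢
  constructor
  · rintro ⟨r, hr⟩
    rcases hr with ⟨hx, hz⟩ | ⟨hx, hz⟩ | ⟨hx, hz⟩
    · rcases fin3_cases (A r y) with hy | hy | hy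
      · exact h2.1 ⟨r, Or.inl ⟨hy, hz⟩⟩
      · exact h1.1 ⟨r, Or.inl ⟨hx, hy⟩⟩
      · exact h1.1 ⟨r, Or.inr (Or.inl ⟨hx, hy⟩)⟩
    · rcases fin3_cases (A r y) with hy | hy | hy
      · exact h2.1 ⟨r, Or.inr (Or.inl ⟨hy, hz⟩)⟩
      · exact h1.1 ⟨r, Or.inl ⟨hx, hy⟩⟩
      · exact h1.1 ⟨r, Or.inr (Or.inl ⟨hx, hy⟩)⟩
    · rcases fin3_cases (A r y) with hy | hy | hy
      · exact h2.1 ⟨r, Or.inl ⟨hy, hz⟩⟩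
      · exact h1.1 ⟨r, Or.inr (Or.inr ⟨hx, hy⟩)⟩
      · exact h2.1 ⟨r, Or.inr (Or.inr ⟨hy, hz⟩)⟩
  · by_contra hcon
    push_neg at hcon
    have hxz : ∀ r, A r x = A r z := fun r => by
      by_contra hne
      exact hne (hcon r)
    -- then y ≻ x from h2, contradicting antisymmetry with h1
    have h2' : (false, true) ∉ indA A y x ∧ ∃ r, A r y ≠ A r x := by
      refine ⟨?_, ?_⟩
      · intro hm
        refine h2.1 ?_
        rwa [indA_congr hxz] at hm
      · obtain ⟨r, hr⟩ := h2.2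
        exact ⟨r, by rw [← hxz r] at hr; exact hr⟩
    exact colGreater_antisymm (colGreater_iff.2 h1) (colGreater_iff.2 h2')

end ColG


section Core
variable {n m : ℕ} {A : Fin n → Fin m → Fin 3} {B₁ B₂ : Fin n → Fin m → Bool}

/-- Column `x` dominates `y` in every haplotype row. -/
def Abv (B₁ B₂ : Fin n → Fin m → Bool) (x y : Fin m) : Prop :=
  ∀ r, (B₁ r y = true → B₁ r x = true) ∧ (B₂ r y = true → B₂ r x = true)

lemma not_abv_mem {x y : Fin m} (h : ¬ Abv B₁ B₂ x y) :
    (false, true) ∈ indB B₁ B₂ x y := by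
  obtain ⟨r, hr⟩ := not_forall.1 h
  rw [not_and_or] at hr
  rcases hr with hr | hr
  · rw [Classical.not_imp] at hr
    exact ⟨r, Or.inl ⟨by simpa using hr.2, hr.1⟩⟩
  · rw [Classical.not_imp] at hr
    exact ⟨r, Or.inr ⟨by simpa using hr.2, hr.1⟩⟩

lemma abv_not_mem {x y : Fin m} (h : Abv B₁ B₂ x y) :
    (false, true) ∉ indB B₁ B₂ x y := by
  rintro ⟨r, ⟨hx, hy⟩ | ⟨hx, hy⟩⟩
  · rw [(h r).1 hy] at hx; simp at hx
  · rw [(h r).2 hy] at hx; simp at hx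

lemma abv_or_abv (hT : ThreeGamete B₁ B₂) {x y : Fin m}
    (h11 : (true, true) ∈ indB B₁ B₂ x y) : Abv B₁ B₂ x y ∨ Abv B₁ B₂ y x := by
  by_contra h
  push_neg at h
  exact tg_three hT x y ⟨not_abv_mem h.1, indB_swap.1 (not_abv_mem h.2), h11⟩

lemma boolToFin3_inj {a b : Bool} (h : boolToFin3 a = boolToFin3 b) : a = b := by
  cases a <;> cases b <;> simp_all [boolToFin3]

lemma bcols_eq (hE : Explains B₁ B₂ A) (hT : ThreeGamete B₁ B₂) {x y : Fin m}
    (h11 : (true, true) ∈ indB B₁ B₂ x y) (hc : ∀ ρ, A ρ x = A ρ y) :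
    ∀ ρ, B₁ ρ x = B₁ ρ y ∧ B₂ ρ x = B₂ ρ y := by
  intro ρ
  by_cases h2 : A ρ x = 2
  · have h2y : A ρ y = 2 := by rw [← hc ρ]; exact h2
    by_cases hs : B₁ ρ x = B₁ ρ y
    · exact ⟨hs, by rw [explains_two hE ρ x h2, explains_two hE ρ y h2y, hs]⟩
    · exfalso
      have ho := opp_mem hE h2 h2y hs
      exact tg_three hT x y ⟨ho.1, ho.2, h11⟩
  · have h2y : A ρ y ≠ 2 := by rw [← hc ρ]; exact h2
    obtain ⟨hx1, hx2⟩ := explains_ne2 hE ρ x h2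
    obtain ⟨hy1, hy2⟩ := explains_ne2 hE ρ y h2y
    have : B₁ ρ x = B₁ ρ y := boolToFin3_inj (by rw [← hx1, ← hy1, hc ρ])
    exact ⟨this, by rw [hx2, hy2, this]⟩

lemma step_abv (hE : Explains B₁ B₂ A) (hT : ThreeGamete B₁ B₂) {r : Fin n} {x : Fin m}
    (hx2 : A r x = 2) (hmax : ∀ z, A r z = 2 → ¬ ColGreater A z x) :
    ∀ y, A r y = 2 → B₁ r y = B₁ r x → Abv B₁ B₂ x y := by
  intro y hy2 hside
  have h11 := (same_mem hE hx2 hy2 hside.symm).1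
  rcases abv_or_abv hT h11 with h | h
  · exact h
  · by_cases hxy : Abv B₁ B₂ x y
    · exact hxy
    exfalso
    have h01 : (false, true) ∉ indA A y x :=
      fun hm => (abv_not_mem h) (indA_sub_indB hE y x hm)
    have hdiff : ∃ ρ, A ρ y ≠ A ρ x := by
      by_contra hc
      push_neg at hc
      refine hxy ?_
      intro ρ
      have := bcols_eq hE hT h11 (fun ρ' => (hc ρ').symm) ρ
      exact ⟨fun hh => by rw [this.1]; exact hh, fun hh => by rw [this.2]; exact hh⟩
    exact hmax y hy2 ⟨(colGreater_iff.2 ⟨h01, hdiff⟩).1, (colGreater_iff.2 ⟨h01, hdiff⟩).2⟩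

lemma M_mono_aux (hE : Explains B₁ B₂ A) (hT : ThreeGamete B₁ B₂) {r r₂ : Fin n} {k l : Fin m}
    (hrk : A r k = 2) (hrl : A r l = 2) (hr2k : A r₂ k = 2) (hr2l : A r₂ l = 2)
    (hopp : B₁ r k ≠ B₁ r l) (hopp2 : B₁ r₂ k ≠ B₁ r₂ l)
    {x : Fin m} (hx : A r x = 2) (hmax : ∀ z, A r z = 2 → ¬ ColGreater A z x)
    (hside : B₁ r x = B₁ r k) :
    A r₂ x = 2 ∧ ∀ z, A r₂ z = 2 → ¬ ColGreater A z x := by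
  have habvk : Abv B₁ B₂ x k := step_abv hE hT hx hmax k hrk hside.symm
  have hoppxl : B₁ r x ≠ B₁ r l := by rw [hside]; exact hopp
  have hoxl := opp_mem hE hx hrl hoppxl
  have h11no : (true, true) ∉ indB B₁ B₂ x l :=
    fun h => tg_three hT x l ⟨hoxl.1, hoxl.2, h⟩
  have hx2' : A r₂ x = 2 := by
    by_contra hne
    obtain ⟨hBx, hBx2⟩ := explains_ne2 hE r₂ x hne
    have hx1 : B₁ r₂ x = true := by
      cases hk : B₁ r₂ k
      · have hk2 : B₂ r₂ k = true := by rw [explains_two hE r₂ k hr2k, hk]; rfl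
        have := (habvk r₂).2 hk2
        rwa [hBx2] at this
      · exact (habvk r₂).1 hk
    refine h11no ?_
    cases hlv : B₁ r₂ l
    · have hl2 : B₂ r₂ l = true := by rw [explains_two hE r₂ l hr2l, hlv]; rfl
      exact ⟨r₂, Or.inr ⟨by rw [hBx2]; exact hx1, hl2⟩⟩
    · exact ⟨r₂, Or.inl ⟨hx1, hlv⟩⟩
  have hside2 : B₁ r₂ x = B₁ r₂ k := by
    by_contra hne
    have ho := opp_mem hE hx2' hr2k hne
    have h11 := (same_mem hE hx hrk hside).1
    exact tg_three hT x k ⟨ho.1, ho.2, h11⟩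
  refine ⟨hx2', ?_⟩
  intro z hz2 hzx
  by_cases hzs : B₁ r₂ z = B₁ r₂ x
  · have h11zx := (same_mem hE hz2 hx2' hzs).1
    by_cases haxz : Abv B₁ B₂ x z
    · have h10 : (true, false) ∉ indA A z x := by
        intro hm
        obtain ⟨ρ, hρ⟩ := indA_sub_indB hE z x hm
        rcases hρ with ⟨hz1, hx0⟩ | ⟨hz1, hx0⟩
        · rw [(haxz ρ).1 hz1] at hx0; simp at hx0
        · rw [(haxz ρ).2 hz1] at hx0; simp at hx0
      have h01 := (colGreater_iff.1 hzx).1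
      obtain ⟨ρ, hρ⟩ := (colGreater_iff.1 hzx).2
      exact hρ (noMix h01 h10 ρ)
    · have habvzx : Abv B₁ B₂ z x := (abv_or_abv hT h11zx).resolve_right haxz
      rcases fin3_cases (A r z) with h0 | h1 | h2
      · have hz0 := (hE r z).1 h0
        cases hxv : B₁ r x
        · have hx2v : B₂ r x = true := by rw [explains_two hE r x hx, hxv]; rfl
          have := (habvzx r).2 hx2v
          rw [hz0.2] at this; simp at this
        · have := (habvzx r).1 hxv
          rw [hz0.1] at this; simp at this
      · have hz1 := (hE r z).2.1 h1
        have h11zl : (true, true) ∈ indB B₁ B₂ z l := by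
          cases hlv : B₁ r l
          · have hl2 : B₂ r l = true := by rw [explains_two hE r l hrl, hlv]; rfl
            exact ⟨r, Or.inr ⟨hz1.2, hl2⟩⟩
          · exact ⟨r, Or.inl ⟨hz1.1, hlv⟩⟩
        have hzl : B₁ r₂ z ≠ B₁ r₂ l := by
          rw [hzs, hside2]; exact hopp2
        have ho := opp_mem hE hz2 hr2l hzl
        exact tg_three hT z l ⟨ho.1, ho.2, h11zl⟩
      · exact hmax z h2 hzx
  · have ho := opp_mem hE hz2 hx2' hzs
    have h11n : (true, true) ∉ indB B₁ B₂ z x :=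
      fun h => tg_three hT z x ⟨ho.1, ho.2, h⟩
    have h01 := (colGreater_iff.1 hzx).1
    rcases fin3_cases (A r z) with h0 | h1 | h2
    · exact h01 ⟨r, Or.inr (Or.inl ⟨h0, hx⟩)⟩
    · exact h11n (indA_sub_indB hE z x ⟨r, Or.inr (Or.inl ⟨h1, hx⟩)⟩)
    · exact hmax z h2 hzx

lemma M_mono (hE : Explains B₁ B₂ A) (hT : ThreeGamete B₁ B₂) {r r₂ : Fin n} {k l : Fin m}
    (hrk : A r k = 2) (hrl : A r l = 2) (hr2k : A r₂ k = 2) (hr2l : A r₂ l = 2)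
    (hopp : B₁ r k ≠ B₁ r l) (hopp2 : B₁ r₂ k ≠ B₁ r₂ l)
    {x : Fin m} (hx : A r x = 2) (hmax : ∀ z, A r z = 2 → ¬ ColGreater A z x) :
    A r₂ x = 2 ∧ ∀ z, A r₂ z = 2 → ¬ ColGreater A z x := by
  by_cases hside : B₁ r x = B₁ r k
  · exact M_mono_aux hE hT hrk hrl hr2k hr2l hopp hopp2 hx hmax hside
  · have hside' : B₁ r x = B₁ r l := by
      cases h1 : B₁ r x <;> cases h2 : B₁ r k <;> cases h3 : B₁ r l <;> simp_all
    exact M_mono_aux hE hT hrl hrk hr2l hr2k (Ne.symm hopp) (Ne.symm hopp2) hx hmax hside'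

lemma core_eq (hE : Explains B₁ B₂ A) (hT : ThreeGamete B₁ B₂) {i j : Fin m} {r r₂ : Fin n}
    (hri : r ∈ rowSet A i) (hrj : r₂ ∈ rowSet A j) {k l : Fin m}
    (hrk : A r k = 2) (hrl : A r l = 2) (hr2k : A r₂ k = 2) (hr2l : A r₂ l = 2)
    (hopp : B₁ r k ≠ B₁ r l) : i = j := by
  have hopp2 : B₁ r₂ k ≠ B₁ r₂ l := by
    intro hs
    have h11 := (same_mem hE hr2k hr2l hs).1
    have ho := opp_mem hE hrk hrl hopp
    exact tg_three hT k l ⟨ho.1, ho.2, h11⟩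
  obtain ⟨hi2, hia, hib⟩ := hri
  obtain ⟨hj2, hja, hjb⟩ := hrj
  have hiM : ∀ z, A r z = 2 → ¬ ColGreater A z i := by
    intro z hz hcg
    by_cases hzi : z = i
    · rw [hzi] at hcg; exact colGreater_irrefl i hcg
    · exact hia z hzi hz hcg
  have hjM : ∀ z, A r₂ z = 2 → ¬ ColGreater A z j := by
    intro z hz hcg
    by_cases hzj : z = j
    · rw [hzj] at hcg; exact colGreater_irrefl j hcg
    · exact hja z hzj hz hcg
  have hiM₂ := M_mono hE hT hrk hrl hr2k hr2l hopp hopp2 hi2 hiM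
  have hjM₁ := M_mono hE hT hr2k hr2l hrk hrl hopp2 hopp hj2 hjM
  by_contra hne
  have h1 : i < j := hib j (fun h => hne h.symm)
    ⟨hjM₁.1, fun k' _ hk2 => hjM₁.2 k' hk2⟩
  have h2 : j < i := hjb i hne
    ⟨hiM₂.1, fun k' _ hk2 => hiM₂.2 k' hk2⟩
  exact absurd h1 (not_lt.2 h2.le)

end Core


section FDir
variable {n m : ℕ} {A : Fin n → Fin m → Fin 3} {B₁ B₂ : Fin n → Fin m → Bool}

lemma forward_C1 (hE : Explains B₁ B₂ A) (hT : ThreeGamete B₁ B₂) (i j : Fin m) :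
    ¬ (({(false, true), (true, false), (true, true)} : Set (Bool × Bool)) ⊆ indA A i j) :=
  fun hsub => hT i j (fun p hp => indA_sub_indB hE i j (hsub hp))

lemma forward_C2 (hE : Explains B₁ B₂ A) (hT : ThreeGamete B₁ B₂) (i : Fin m) :
    ¬ HasOddWeightCycle (resEdge A i) := by
  classical
  rintro ⟨p, c, w, hinj, hedge, hinjE, hodd⟩
  set s : Fin m → Bool := fun k => decide ((true, true) ∈ indB B₁ B₂ i k) with hs
  have sVal : ∀ r' ∈ rowSet A i, ∀ k, A r' k = 2 → (s k = true ↔ B₁ r' k = B₁ r' i) := by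
    intro r' hr' k hk2
    have hii : A r' i = 2 := hr'.1
    simp only [hs, decide_eq_true_eq]
    constructor
    · intro h11
      by_contra hne
      have ho := opp_mem hE hii hk2 (fun h => hne h.symm)
      exact tg_three hT i k ⟨ho.1, ho.2, h11⟩
    · intro hsame
      exact (same_mem hE hii hk2 hsame.symm).1
  have edgeParity : ∀ k l w', resEdge A i k l w' → ((s k ≠ s l) ↔ w' = 1) := by
    rintro k l w' ⟨hkl, ⟨r', hr', hk2, hl2⟩, hcase⟩
    have hk := sVal r' hr' k hk2
    have hl := sVal r' hr' l hl2
    rcases hcase with ⟨rfl, hw0⟩ | ⟨rfl, hw1⟩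
    · rw [iff_false_intro (by norm_num : (0:ℕ) ≠ 1), iff_false, not_not]
      have hB : B₁ r' k = B₁ r' l := by
        by_contra hopp
        rcases hw0 with h11 | ⟨j, hji, r₂, hr₂, h2k, h2l⟩
        · have ho := opp_mem hE hk2 hl2 hopp
          exact tg_three hT k l ⟨ho.1, ho.2, indA_sub_indB hE k l h11⟩
        · exact hji (core_eq hE hT hr' hr₂ hk2 hl2 h2k h2l hopp).symm
      rw [Bool.eq_iff_iff, hk, hl, hB]
    · rw [iff_true_intro rfl, iff_true]
      have hB : B₁ r' k ≠ B₁ r' l := by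
        intro hsame
        have h11 := (same_mem hE hk2 hl2 hsame).1
        exact tg_three hT k l ⟨indA_sub_indB hE k l (hw1 (by simp)),
          indA_sub_indB hE k l (hw1 (by simp)), h11⟩
      rw [Ne, Bool.eq_iff_iff, hk, hl]
      intro hiff
      cases h1 : B₁ r' k <;> cases h2 : B₁ r' l <;> cases h3 : B₁ r' i <;> simp_all
  -- parity telescoping in ZMod 2
  set f : Fin (p+1) → ZMod 2 := fun t => if s (c t) = true then 1 else 0 with hf
  have hW : ∀ t, ((w t : ZMod 2)) = f t + f (t + 1) := by
    intro t
    have he := hedge t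
    have hpar := edgeParity _ _ _ he
    have hw01 : w t = 0 ∨ w t = 1 := by
      rcases he.2.2 with ⟨h, -⟩ | ⟨h, -⟩
      · exact Or.inl h
      · exact Or.inr h
    rcases hw01 with h0 | h1
    · rw [h0] at hpar ⊢
      have : s (c t) = s (c (t+1)) := by
        by_contra hne
        exact absurd (hpar.1 hne) (by norm_num)
      simp only [hf, this]
      cases h2 : s (c (t+1)) <;> simp [h2] <;> decide
    · rw [h1] at hpar ⊢
      have hne : s (c t) ≠ s (c (t+1)) := hpar.2 rfl
      simp only [hf]
      cases h2 : s (c t) <;> cases h3 : s (c (t+1)) <;> simp_all <;> decide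
  have hsum0 : ((∑ t, w t : ℕ) : ZMod 2) = 0 := by
    push_cast
    rw [Finset.sum_congr rfl (fun t _ => hW t)]
    rw [Finset.sum_add_distrib]
    have hshift : ∑ t, f (t + 1) = ∑ t, f t :=
      Fintype.sum_equiv (Equiv.addRight (1 : Fin (p+1))) _ f (fun t => rfl)
    rw [hshift, ← two_mul]
    have : (2 : ZMod 2) = 0 := by decide
    rw [this, zero_mul]
  rcases hodd with ⟨k2, hk2⟩
  rw [hk2] at hsum0
  push_cast at hsum0
  have : (2 : ZMod 2) = 0 := by decide
  rw [this] at hsum0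
  simp at hsum0

end FDir


section Bwd
variable {n m : ℕ} {A : Fin n → Fin m → Fin 3}

lemma finset_exists_max {α : Type*} (R : α → α → Prop)
    (htrans : ∀ a b c, R a b → R b c → R a c) (hirr : ∀ a, ¬ R a a) :
    ∀ (N : ℕ) (S : Finset α), S.card ≤ N → S.Nonempty → ∃ x ∈ S, ∀ z ∈ S, ¬ R z x := by
  classical
  intro N
  induction N with
  | zero =>
    intro S hcard hne
    obtain ⟨a, ha⟩ := hne
    have := Finset.card_pos.2 ⟨a, ha⟩
    omega
  | succ N ih =>
    intro S hcard hne
    obtain ⟨a, ha⟩ := hne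
    by_cases hmax : ∀ z ∈ S, ¬ R z a
    · exact ⟨a, ha, hmax⟩
    · push_neg at hmax
      obtain ⟨z, hz, hza⟩ := hmax
      set S' := S.filter (fun u => R u a) with hS'
      have hzS' : z ∈ S' := by simp [hS', hz, hza]
      have hsub : S' ⊆ S := Finset.filter_subset _ _
      have haS' : a ∉ S' := by simp [hS', hirr a]
      have hss : S' ⊂ S := ⟨hsub, fun hc => haS' (hc ha)⟩
      have hcard' : S'.card ≤ N := by
        have := Finset.card_lt_card hss
        omega
      obtain ⟨x, hxS', hxmax⟩ := ih S' hcard' ⟨z, hzS'⟩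
      refine ⟨x, hsub hxS', ?_⟩
      intro u hu hux
      have hxa : R x a := by
        have := hxS'
        simp [hS'] at this
        exact this.2
      have hua : R u a := htrans u x a hux hxa
      exact hxmax u (by simp [hS', hu, hua]) hux

theorem backward_dir (hC1 : ∀ i j : Fin m,
      ¬ (({(false, true), (true, false), (true, true)} : Set (Bool × Bool)) ⊆ indA A i j))
    (hC2 : ∀ i : Fin m, ¬ HasOddWeightCycle (resEdge A i)) :
    AdmitsDirectedPP A := by
  classical
  -- resEdge properties
  have hsym : ∀ i k l w, resEdge A i k l w → resEdge A i l k w := by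
    rintro i k l w ⟨hkl, ⟨r, hr, hk, hl⟩, hcase⟩
    refine ⟨hkl.symm, ⟨r, hr, hl, hk⟩, ?_⟩
    rcases hcase with ⟨hw, h0⟩ | ⟨hw, h1⟩
    · refine Or.inl ⟨hw, ?_⟩
      rcases h0 with h11 | ⟨j, hj, r₂, hr₂, h2k, h2l⟩
      · exact Or.inl (indA_swap.1 h11)
      · exact Or.inr ⟨j, hj, r₂, hr₂, h2l, h2k⟩
    · refine Or.inr ⟨hw, ?_⟩
      intro p hp
      simp only [Set.mem_insert_iff, Set.mem_singleton_iff] at hp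
      rcases hp with rfl | rfl
      · exact indA_swap.1 (h1 (by simp))
      · exact indA_swap.1 (h1 (by simp))
  have hirr : ∀ i a w, ¬ resEdge A i a a w := fun i a w h => h.1 rfl
  have hw01 : ∀ i k l w, resEdge A i k l w → w = 0 ∨ w = 1 := by
    rintro i k l w ⟨-, -, ⟨hw, -⟩ | ⟨hw, -⟩⟩
    · exact Or.inl hw
    · exact Or.inr hw
  have hsfun : ∀ i : Fin m, ∃ s : Fin m → Bool,
      ∀ k l w, resEdge A i k l w → ((s k ≠ s l) ↔ w = 1) :=
    fun i => parity_exists (hsym i) (hirr i) (hw01 i) (hC2 i)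
  choose sf hsf using hsfun
  -- the maximal-column sets
  set Mset : Fin n → Finset (Fin m) :=
    fun r => Finset.univ.filter (fun x => A r x = 2 ∧ ∀ z, A r z = 2 → ¬ ColGreater A z x)
    with hMset
  have hMne : ∀ r, (∃ c, A r c = 2) → (Mset r).Nonempty := by
    rintro r ⟨c, hc⟩
    set S : Finset (Fin m) := Finset.univ.filter (fun x => A r x = 2) with hSS
    obtain ⟨x, hxS, hxmax⟩ := finset_exists_max (ColGreater A)
      (fun a b c hab hbc => colGreater_trans hab hbc) colGreater_irrefl
      S.card S le_rfl ⟨c, by simp [hSS, hc]⟩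
    refine ⟨x, ?_⟩
    simp only [hMset, Finset.mem_filter, Finset.mem_univ, true_and]
    simp only [hSS, Finset.mem_filter, Finset.mem_univ, true_and] at hxS
    exact ⟨hxS, fun z hz => hxmax z (by simp [hSS, hz])⟩
  set B₁ : Fin n → Fin m → Bool := fun r c =>
    if h2 : A r c = 2 then sf ((Mset r).min' (hMne r ⟨c, h2⟩)) c else decide (A r c = 1)
    with hB₁
  set B₂ : Fin n → Fin m → Bool := fun r c =>
    if h2 : A r c = 2 then !(sf ((Mset r).min' (hMne r ⟨c, h2⟩)) c) else decide (A r c = 1)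
    with hB₂
  have hB1val : ∀ r c (h2 : A r c = 2),
      B₁ r c = sf ((Mset r).min' (hMne r ⟨c, h2⟩)) c := by
    intro r c h2
    simp only [hB₁, dif_pos h2]
  have hB2val : ∀ r c (h2 : A r c = 2),
      B₂ r c = !(sf ((Mset r).min' (hMne r ⟨c, h2⟩)) c) := by
    intro r c h2
    simp only [hB₂, dif_pos h2]
  have hmin_irrel : ∀ r (h h' : (Mset r).Nonempty), (Mset r).min' h = (Mset r).min' h' :=
    fun r h h' => rfl
  -- explains
  have hExp : Explains B₁ B₂ A := by
    intro r c
    refine ⟨?_, ?_, ?_⟩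
    · intro h0
      have hne : A r c ≠ 2 := by rw [h0]; decide
      simp only [hB₁, hB₂, dif_neg hne, h0]
      exact ⟨by decide, by decide⟩
    · intro h1
      have hne : A r c ≠ 2 := by rw [h1]; decide
      simp only [hB₁, hB₂, dif_neg hne, h1]
      exact ⟨by decide, by decide⟩
    · intro h2
      rw [hB1val r c h2, hB2val r c h2]
      simp
  -- row membership
  have hrowMem : ∀ r (h : (Mset r).Nonempty), r ∈ rowSet A ((Mset r).min' h) := by
    intro r h
    have hmem := (Mset r).min'_mem h
    simp only [hMset, Finset.mem_filter, Finset.mem_univ, true_and] at hmem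
    obtain ⟨hi2, himax⟩ := hmem
    refine ⟨hi2, fun j _ hj => himax j hj, ?_⟩
    intro j hji ⟨hj2, hjmax⟩
    have hjMem : j ∈ Mset r := by
      simp only [hMset, Finset.mem_filter, Finset.mem_univ, true_and]
      refine ⟨hj2, fun z hz hcg => ?_⟩
      by_cases hzj : z = j
      · rw [hzj] at hcg; exact colGreater_irrefl j hcg
      · exact hjmax z hzj hz hcg
    exact lt_of_le_of_ne ((Mset r).min'_le j hjMem) (Ne.symm hji)
  -- resolution value of a doubly-heterozygous row
  have hres : ∀ (ρ : Fin n) (x y : Fin m) (hx : A ρ x = 2) (hy : A ρ y = 2),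
      (B₁ ρ x = B₁ ρ y) ↔
        (sf ((Mset ρ).min' (hMne ρ ⟨x, hx⟩)) x = sf ((Mset ρ).min' (hMne ρ ⟨x, hx⟩)) y) := by
    intro ρ x y hx hy
    rw [hB1val ρ x hx, hB1val ρ y hy]
  -- forced resolutions
  have hedge_base : ∀ (ρ : Fin n) (x y : Fin m) (hx : A ρ x = 2) (hy : A ρ y = 2),
      x ≠ y → ∃ r' ∈ rowSet A ((Mset ρ).min' (hMne ρ ⟨x, hx⟩)), A r' x = 2 ∧ A r' y = 2 :=
    fun ρ x y hx hy _ => ⟨ρ, hrowMem ρ _, hx, hy⟩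
  have F1 : ∀ (ρ : Fin n) (x y : Fin m) (hx : A ρ x = 2) (hy : A ρ y = 2), x ≠ y →
      ((true, true) : Bool × Bool) ∈ indA A x y → B₁ ρ x = B₁ ρ y := by
    intro ρ x y hx hy hxy h11
    set i := (Mset ρ).min' (hMne ρ ⟨x, hx⟩)
    have hedge : resEdge A i x y 0 :=
      ⟨hxy, hedge_base ρ x y hx hy hxy, Or.inl ⟨rfl, Or.inl h11⟩⟩
    rw [hres ρ x y hx hy]
    by_contra hne
    exact absurd ((hsf i x y 0 hedge).1 hne) (by norm_num)
  have F2 : ∀ (ρ : Fin n) (x y : Fin m) (hx : A ρ x = 2) (hy : A ρ y = 2), x ≠ y →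
      (({(false, true), (true, false)} : Set (Bool × Bool)) ⊆ indA A x y) →
      B₁ ρ x ≠ B₁ ρ y := by
    intro ρ x y hx hy hxy hsub
    set i := (Mset ρ).min' (hMne ρ ⟨x, hx⟩)
    have hedge : resEdge A i x y 1 :=
      ⟨hxy, hedge_base ρ x y hx hy hxy, Or.inr ⟨rfl, hsub⟩⟩
    have hdiff := (hsf i x y 1 hedge).2 rfl
    intro hB
    exact hdiff ((hres ρ x y hx hy).1 hB)
  have F3 : ∀ (ρ ρ' : Fin n) (x y : Fin m) (hx : A ρ x = 2) (hy : A ρ y = 2)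
      (hx' : A ρ' x = 2) (hy' : A ρ' y = 2), x ≠ y →
      (Mset ρ).min' (hMne ρ ⟨x, hx⟩) ≠ (Mset ρ').min' (hMne ρ' ⟨x, hx'⟩) →
      B₁ ρ x = B₁ ρ y := by
    intro ρ ρ' x y hx hy hx' hy' hxy hii
    set i := (Mset ρ).min' (hMne ρ ⟨x, hx⟩)
    set j := (Mset ρ').min' (hMne ρ' ⟨x, hx'⟩)
    have hedge : resEdge A i x y 0 :=
      ⟨hxy, hedge_base ρ x y hx hy hxy,
        Or.inl ⟨rfl, Or.inr ⟨j, Ne.symm hii, ρ', hrowMem ρ' _, hx', hy'⟩⟩⟩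
    rw [hres ρ x y hx hy]
    by_contra hne
    exact absurd ((hsf i x y 0 hedge).1 hne) (by norm_num)
  -- resolution consistency across rows
  have hcons : ∀ (ρ ρ' : Fin n) (x y : Fin m) (hx : A ρ x = 2) (hy : A ρ y = 2)
      (hx' : A ρ' x = 2) (hy' : A ρ' y = 2), x ≠ y →
      ((B₁ ρ x = B₁ ρ y) ↔ (B₁ ρ' x = B₁ ρ' y)) := by
    intro ρ ρ' x y hx hy hx' hy' hxy
    by_cases hii : (Mset ρ).min' (hMne ρ ⟨x, hx⟩) = (Mset ρ').min' (hMne ρ' ⟨x, hx'⟩)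
    · rw [hres ρ x y hx hy, hres ρ' x y hx' hy', hii]
    · constructor <;> intro
      · exact F3 ρ' ρ x y hx' hy' hx hy hxy (Ne.symm hii)
      · exact F3 ρ ρ' x y hx hy hx' hy' hxy hii
  -- membership characterization
  have hAval : ∀ r c, A r c ≠ 2 → A r c = boolToFin3 (B₁ r c) := by
    intro r c hne
    simp only [hB₁, dif_neg hne]
    rcases fin3_cases (A r c) with h | h | h
    · rw [h]; simp [boolToFin3]
    · rw [h]; simp [boolToFin3]
    · exact absurd h hne
  have hB2ne : ∀ r c, A r c ≠ 2 → B₂ r c = B₁ r c := by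
    intro r c hne
    simp only [hB₁, hB₂, dif_neg hne]
  have memCases : ∀ (x y : Fin m) (p : Bool × Bool), p ∈ indB B₁ B₂ x y →
      p ∈ indA A x y ∨
      ∃ ρ, A ρ x = 2 ∧ A ρ y = 2 ∧ ((p.1 = p.2) ↔ (B₁ ρ x = B₁ ρ y)) := by
    rintro x y ⟨px, py⟩ ⟨ρ, hcase⟩
    by_cases hx2 : A ρ x = 2 <;> by_cases hy2 : A ρ y = 2
    · refine Or.inr ⟨ρ, hx2, hy2, ?_⟩
      rcases hcase with ⟨h1, h2⟩ | ⟨h1, h2⟩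
      · rw [← h1, ← h2]
      · rw [← h1, ← h2]
        rw [hB2val ρ x hx2, hB2val ρ y hy2, hB1val ρ x hx2, hB1val ρ y hy2]
        simp
    · refine Or.inl ⟨ρ, Or.inr (Or.inr ⟨hx2, ?_⟩)⟩
      rcases hcase with ⟨h1, h2⟩ | ⟨h1, h2⟩
      · rw [← h2]; exact hAval ρ y hy2
      · rw [← h2, hB2ne ρ y hy2]; exact hAval ρ y hy2
    · refine Or.inl ⟨ρ, Or.inr (Or.inl ⟨?_, hy2⟩)⟩
      rcases hcase with ⟨h1, h2⟩ | ⟨h1, h2⟩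
      · rw [← h1]; exact hAval ρ x hx2
      · rw [← h1, hB2ne ρ x hx2]; exact hAval ρ x hx2
    · refine Or.inl ⟨ρ, Or.inl ⟨?_, ?_⟩⟩
      · rcases hcase with ⟨h1, -⟩ | ⟨h1, -⟩
        · rw [← h1]; exact hAval ρ x hx2
        · rw [← h1, hB2ne ρ x hx2]; exact hAval ρ x hx2
      · rcases hcase with ⟨-, h2⟩ | ⟨-, h2⟩
        · rw [← h2]; exact hAval ρ y hy2
        · rw [← h2, hB2ne ρ y hy2]; exact hAval ρ y hy2
  -- three gamete property
  have hTG : ThreeGamete B₁ B₂ := by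
    intro x y hsub
    have h01 := hsub (by simp : ((false, true) : Bool × Bool) ∈ _)
    have h10 := hsub (by simp : ((true, false) : Bool × Bool) ∈ _)
    have h11 := hsub (by simp : ((true, true) : Bool × Bool) ∈ _)
    by_cases hxy : x = y
    · subst hxy
      rcases memCases x x _ h01 with ⟨ρ, hρ⟩ | ⟨ρ, h2, -, hiff⟩
      · rcases hρ with ⟨h1, h2⟩ | ⟨h1, h2⟩ | ⟨h1, h2⟩
        · rw [h1] at h2; exact absurd h2 (by simp [boolToFin3])
        · rw [h1] at h2; exact absurd h2 (by simp [boolToFin3])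
        · rw [h1] at h2; exact absurd h2.symm (by simp [boolToFin3])
      · simp at hiff
    rcases memCases x y _ h11 with h11A | ⟨ρ₃, h3x, h3y, hiff3⟩
    · -- 11 ∈ indA : any doubly-2 row is same-resolved
      have h01A : ((false, true) : Bool × Bool) ∈ indA A x y := by
        rcases memCases x y _ h01 with h | ⟨ρ₁, h1x, h1y, hiff1⟩
        · exact h
        · exfalso
          simp only [Bool.false_eq_true, false_iff] at hiff1
          exact hiff1 (F1 ρ₁ x y h1x h1y hxy h11A)
      have h10A : ((true, false) : Bool × Bool) ∈ indA A x y := by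
        rcases memCases x y _ h10 with h | ⟨ρ₂, h2x, h2y, hiff2⟩
        · exact h
        · exfalso
          simp only [Bool.true_eq_false, false_iff] at hiff2
          exact hiff2 (F1 ρ₂ x y h2x h2y hxy h11A)
      refine hC1 x y ?_
      intro p hp
      simp only [Set.mem_insert_iff, Set.mem_singleton_iff] at hp
      rcases hp with rfl | rfl | rfl <;> assumption
    · -- a same-resolved doubly-2 row exists
      have hsame3 : B₁ ρ₃ x = B₁ ρ₃ y := hiff3.1 rfl
      have h01A : ((false, true) : Bool × Bool) ∈ indA A x y := by
        rcases memCases x y _ h01 with h | ⟨ρ₁, h1x, h1y, hiff1⟩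
        · exact h
        · exfalso
          simp only [Bool.false_eq_true, false_iff] at hiff1
          exact hiff1 ((hcons ρ₃ ρ₁ x y h3x h3y h1x h1y hxy).1 hsame3)
      have h10A : ((true, false) : Bool × Bool) ∈ indA A x y := by
        rcases memCases x y _ h10 with h | ⟨ρ₂, h2x, h2y, hiff2⟩
        · exact h
        · exfalso
          simp only [Bool.true_eq_false, false_iff] at hiff2
          exact hiff2 ((hcons ρ₃ ρ₂ x y h3x h3y h2x h2y hxy).1 hsame3)
      refine F2 ρ₃ x y h3x h3y hxy ?_ hsame3
      intro p hp
      simp only [Set.mem_insert_iff, Set.mem_singleton_iff] at hp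
      rcases hp with rfl | rfl <;> assumption
  exact ⟨B₁, B₂, hExp, hTG⟩

end Bwd

/-- An `n × m` genotype matrix `A` admits a directed perfect phylogeny if, and only if,
for each pair of columns `i, j` we have `{01,10,11} ⊄ ind^A(i,j)`, and for each column
`i` the resolution graph `G_i` contains no cycle of odd total weight. -/
theorem dpph_characterization {n m : ℕ} (A : Fin n → Fin m → Fin 3) :
    AdmitsDirectedPP A ↔
      ((∀ i j : Fin m,
          ¬ (({(false, true), (true, false), (true, true)} : Set (Bool × Bool)) ⊆ indA A i j)) ∧
       (∀ i : Fin m, ¬ HasOddWeightCycle (resEdge A i))) := by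
  constructor
  · rintro ⟨B₁, B₂, hE, hT⟩
    exact ⟨forward_C1 hE hT, forward_C2 hE hT⟩
  · rintro ⟨hC1, hC2⟩
    exact backward_dir hC1 hC2
end

section
/- Let A be a genotype matrix and B a haplotype matrix explaining A that satisfies the three gamete property. Let i ≠ j be columns, g1 ∈ A_i and g2 ∈ A_j rows of A, and k, l columns with g1[k] = g1[l] = 2 and g2[k] = g2[l] = 2. Then the two rows h1, h1' of B explaining g1 satisfy h1[k] = h1[l] (g1 is resolved equally in columns k and l). -/
namespace PPaux

variable {n m : ℕ}

/-- Row `(r,s)` of the haplotype matrix. -/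
def Hp (B₁ B₂ : Fin n → Fin m → Bool) (r : Fin n) (s : Bool) : Fin m → Bool :=
  match s with
  | false => B₁ r
  | true  => B₂ r

/-- Column `c`'s 1-set is contained in column `d`'s 1-set. -/
def Ssub (B₁ B₂ : Fin n → Fin m → Bool) (c d : Fin m) : Prop :=
  ∀ r s, Hp B₁ B₂ r s c = true → Hp B₁ B₂ r s d = true

variable {A : Fin n → Fin m → Fin 3} {B₁ B₂ : Fin n → Fin m → Bool}

@[simp] lemma b2f3_false : boolToFin3 false = 0 := rfl
@[simp] lemma b2f3_true : boolToFin3 true = 1 := rfl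

lemma fin3_cases (a : Fin 3) : a = 0 ∨ a = 1 ∨ a = 2 := by revert a; decide

lemma bfalse {x : Bool} (h : ¬ x = true) : x = false := by cases x <;> simp_all

lemma mem_indB {c d : Fin m} {x y : Bool} (r : Fin n) (s : Bool)
    (hc : Hp B₁ B₂ r s c = x) (hd : Hp B₁ B₂ r s d = y) :
    (x, y) ∈ indB B₁ B₂ c d := by
  cases s
  · exact ⟨r, Or.inl ⟨hc, hd⟩⟩
  · exact ⟨r, Or.inr ⟨hc, hd⟩⟩

section explains
variable (hexp : Explains B₁ B₂ A)
include hexp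

lemma hap0 {r : Fin n} {c : Fin m} (h : A r c = 0) (s : Bool) : Hp B₁ B₂ r s c = false := by
  cases s
  · exact ((hexp r c).1 h).1
  · exact ((hexp r c).1 h).2

lemma hap1 {r : Fin n} {c : Fin m} (h : A r c = 1) (s : Bool) : Hp B₁ B₂ r s c = true := by
  cases s
  · exact ((hexp r c).2.1 h).1
  · exact ((hexp r c).2.1 h).2

lemma hap2T {r : Fin n} {c : Fin m} (h : A r c = 2) :
    ∃ s, Hp B₁ B₂ r s c = true ∧ Hp B₁ B₂ r (!s) c = false := by
  have hne := (hexp r c).2.2 h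
  cases h1 : B₁ r c <;> cases h2 : B₂ r c
  · rw [h1, h2] at hne; exact absurd rfl hne
  · exact ⟨true, by simpa [Hp] using h2, by simpa [Hp] using h1⟩
  · exact ⟨false, by simpa [Hp] using h1, by simpa [Hp] using h2⟩
  · rw [h1, h2] at hne; exact absurd rfl hne

lemma hap2ne {r : Fin n} {c : Fin m} (h : A r c = 2) (s : Bool) :
    Hp B₁ B₂ r s c ≠ Hp B₁ B₂ r (!s) c := by
  have hne := (hexp r c).2.2 h
  cases s
  · exact hne
  · exact fun he => hne he.symm

lemma hap2F {r : Fin n} {c : Fin m} (h : A r c = 2) {s : Bool}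
    (hT : Hp B₁ B₂ r s c = true) : Hp B₁ B₂ r (!s) c = false := by
  have := hap2ne hexp h s
  rw [hT] at this
  exact bfalse fun he => this he.symm

lemma hap2Tof {r : Fin n} {c : Fin m} (h : A r c = 2) {s : Bool}
    (hF : Hp B₁ B₂ r s c = false) : Hp B₁ B₂ r (!s) c = true := by
  have h2 := hap2ne hexp h s
  rw [hF] at h2
  cases hh : Hp B₁ B₂ r (!s) c
  · rw [hh] at h2; exact absurd rfl h2
  · rfl

lemma Ane0 {r : Fin n} {c : Fin m} {s : Bool} (h : Hp B₁ B₂ r s c = true) : A r c ≠ 0 :=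
  fun h0 => by rw [hap0 hexp h0 s] at h; exact Bool.false_ne_true h

lemma Ane1 {r : Fin n} {c : Fin m} {s : Bool} (h : Hp B₁ B₂ r s c = false) : A r c ≠ 1 :=
  fun h1 => by rw [hap1 hexp h1 s] at h; exact absurd h (by simp)

/-- If both `c` and `d` are `2`-entries of row `r` and the first haplotype agrees on them,
then every haplotype of the pair agrees on them. -/
lemma res_eq {r : Fin n} {c d : Fin m} (h2c : A r c = 2) (h2d : A r d = 2)
    (heq : B₁ r c = B₁ r d) (s : Bool) : Hp B₁ B₂ r s c = Hp B₁ B₂ r s d := by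
  have hc := (hexp r c).2.2 h2c
  have hd := (hexp r d).2.2 h2d
  cases s
  · exact heq
  · show B₂ r c = B₂ r d
    cases e1 : B₁ r c <;> cases e2 : B₂ r c <;> cases e3 : B₁ r d <;> cases e4 : B₂ r d <;>
      simp_all

lemma res_ne {r : Fin n} {c d : Fin m} (h2c : A r c = 2) (h2d : A r d = 2)
    (hne : B₁ r c ≠ B₁ r d) (s : Bool) : Hp B₁ B₂ r s c = !(Hp B₁ B₂ r s d) := by
  have hc := (hexp r c).2.2 h2c
  have hd := (hexp r d).2.2 h2d
  cases s
  · show B₁ r c = !(B₁ r d)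
    cases e1 : B₁ r c <;> cases e3 : B₁ r d <;> simp_all
  · show B₂ r c = !(B₂ r d)
    cases e1 : B₁ r c <;> cases e2 : B₂ r c <;> cases e3 : B₁ r d <;> cases e4 : B₂ r d <;>
      simp_all

end explains

section lam
variable (h3 : ThreeGamete B₁ B₂)
include h3

/-- Laminarity: columns with a common 1-row are nested. -/
lemma laminar {c d : Fin m}
    (hcom : ∃ r s, Hp B₁ B₂ r s c = true ∧ Hp B₁ B₂ r s d = true) :
    Ssub B₁ B₂ c d ∨ Ssub B₁ B₂ d c := by
  by_contra hcon
  push_neg at hcon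
  obtain ⟨h1, h2⟩ := hcon
  unfold Ssub at h1 h2
  push_neg at h1 h2
  obtain ⟨r1, s1, hc1, hd1⟩ := h1
  obtain ⟨r2, s2, hd2, hc2⟩ := h2
  obtain ⟨r0, s0, hc0, hd0⟩ := hcom
  refine h3 c d ?_
  intro p hp
  simp only [Set.mem_insert_iff, Set.mem_singleton_iff] at hp
  rcases hp with rfl | rfl | rfl
  · exact mem_indB r2 s2 (bfalse hc2) hd2
  · exact mem_indB r1 s1 hc1 (bfalse hd1)
  · exact mem_indB r0 s0 hc0 hd0

/-- Columns with crossing witnesses are disjoint. -/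
lemma disj_of {c d : Fin m} {p p' : Fin n} {q q' : Bool}
    (w1c : Hp B₁ B₂ p q c = true) (w1d : Hp B₁ B₂ p q d = false)
    (w2d : Hp B₁ B₂ p' q' d = true) (w2c : Hp B₁ B₂ p' q' c = false) :
    ∀ r s, Hp B₁ B₂ r s c = true → Hp B₁ B₂ r s d = false := by
  intro r s hc
  by_contra hdne
  have hd : Hp B₁ B₂ r s d = true := by
    cases hh : Hp B₁ B₂ r s d
    · exact absurd hh hdne
    · rfl
  rcases laminar h3 ⟨r, s, hc, hd⟩ with h | h
  · have := h p q w1c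
    rw [w1d] at this
    exact Bool.false_ne_true this
  · have := h p' q' w2d
    rw [w2c] at this
    exact Bool.false_ne_true this

end lam

lemma not_mem_triple : ((false, true) : Bool × Bool) ∉
    ({(false, false), (true, false), (true, true)} : Set (Bool × Bool)) := by
  simp

/-- Key lemma: a strict superset column is `≻`-greater. -/
lemma colGreater_of (hexp : Explains B₁ B₂ A) {i c : Fin m}
    (hsub : Ssub B₁ B₂ i c) {r : Fin n} {s : Bool}
    (hw : Hp B₁ B₂ r s c = true) (hwi : Hp B₁ B₂ r s i = false) :
    ColGreater A c i := by
  constructor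
  · rintro ⟨a, b⟩ hp
    cases a <;> cases b
    · simp
    · exfalso
      obtain ⟨r', hr'⟩ := hp
      simp only [b2f3_false, b2f3_true] at hr'
      rcases hr' with ⟨hc0, hi1⟩ | ⟨hc0, hi2⟩ | ⟨hc2, hi1⟩
      · have hT := hap1 hexp hi1 false
        have := hsub r' false hT
        rw [hap0 hexp hc0 false] at this
        exact Bool.false_ne_true this
      · obtain ⟨s', hT, _⟩ := hap2T hexp hi2
        have := hsub r' s' hT
        rw [hap0 hexp hc0 s'] at this
        exact Bool.false_ne_true this
      · obtain ⟨s', hT, hF⟩ := hap2T hexp hc2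
        have := hsub r' (!s') (hap1 hexp hi1 (!s'))
        rw [hF] at this
        exact Bool.false_ne_true this
    · simp
    · simp
  · refine ⟨r, fun he => ?_⟩
    rcases fin3_cases (A r c) with h | h | h
    · rw [hap0 hexp h s] at hw; exact Bool.false_ne_true hw
    · have : A r i = 1 := he ▸ h
      rw [hap1 hexp this s] at hwi; exact absurd hwi (by simp)
    · have h2i : A r i = 2 := he ▸ h
      have hcF : Hp B₁ B₂ r (!s) c = false := hap2F hexp h hw
      have hiT : Hp B₁ B₂ r (!s) i = true := hap2Tof hexp h2i hwi
      have := hsub r (!s) hiT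
      rw [hcF] at this
      exact Bool.false_ne_true this

/-- A `≻`-greater column either contains or is disjoint from the smaller one. -/
lemma colGreater_cases (hexp : Explains B₁ B₂ A) (h3 : ThreeGamete B₁ B₂)
    {c j : Fin m} (hcg : ColGreater A c j) :
    Ssub B₁ B₂ j c ∨ (∀ r s, Hp B₁ B₂ r s j = true → Hp B₁ B₂ r s c = false) := by
  by_cases h1 : Ssub B₁ B₂ j c
  · exact Or.inl h1
  by_cases h2 : ∀ r s, Hp B₁ B₂ r s j = true → Hp B₁ B₂ r s c = false
  · exact Or.inr h2
  exfalso
  unfold Ssub at h1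
  push_neg at h1 h2
  obtain ⟨r, s, hj, hcne⟩ := h1
  have hcF : Hp B₁ B₂ r s c = false := bfalse hcne
  obtain ⟨r', s', hj', hc'ne⟩ := h2
  have hc' : Hp B₁ B₂ r' s' c = true := by
    cases hh : Hp B₁ B₂ r' s' c
    · exact absurd hh hc'ne
    · rfl
  have hccj : Ssub B₁ B₂ c j := by
    rcases laminar h3 ⟨r', s', hc', hj'⟩ with h | h
    · exact h
    · exfalso
      have := h r s hj
      rw [hcF] at this
      exact Bool.false_ne_true this
  -- now (r,s) ∈ S_j \ S_c; case on genotype values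
  have hji := Ane0 hexp hj
  have hci := Ane1 hexp hcF
  rcases fin3_cases (A r j) with h0 | hj1 | hj2
  · exact hji h0
  · rcases fin3_cases (A r c) with hc0 | hc1 | hc2
    · exact not_mem_triple (hcg.1 ⟨r, Or.inl ⟨by simpa using hc0, by simpa using hj1⟩⟩)
    · exact hci hc1
    · exact not_mem_triple (hcg.1 ⟨r, Or.inr (Or.inr ⟨hc2, by simpa using hj1⟩)⟩)
  · rcases fin3_cases (A r c) with hc0 | hc1 | hc2
    · exact not_mem_triple (hcg.1 ⟨r, Or.inr (Or.inl ⟨by simpa using hc0, hj2⟩)⟩)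
    · exact hci hc1
    · have hcT : Hp B₁ B₂ r (!s) c = true := hap2Tof hexp hc2 hcF
      have hjT : Hp B₁ B₂ r (!s) j = true := hccj r (!s) hcT
      have := hap2F hexp hj2 hj
      rw [hjT] at this
      exact absurd this (by simp)

lemma geno_col_eq (hexp : Explains B₁ B₂ A) {i j : Fin m}
    (hij1 : Ssub B₁ B₂ i j) (hij2 : Ssub B₁ B₂ j i) : ∀ r, A r i = A r j := by
  intro r
  rcases fin3_cases (A r i) with hi | hi | hi <;> rcases fin3_cases (A r j) with hj | hj | hj
  · rw [hi, hj]
  · exfalso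
    have := hij2 r false (hap1 hexp hj false)
    rw [hap0 hexp hi false] at this; exact Bool.false_ne_true this
  · exfalso
    obtain ⟨s, hT, _⟩ := hap2T hexp hj
    have := hij2 r s hT
    rw [hap0 hexp hi s] at this; exact Bool.false_ne_true this
  · exfalso
    have := hij1 r false (hap1 hexp hi false)
    rw [hap0 hexp hj false] at this; exact Bool.false_ne_true this
  · rw [hi, hj]
  · exfalso
    obtain ⟨s, hT, hF⟩ := hap2T hexp hj
    have := hij1 r (!s) (hap1 hexp hi (!s))
    rw [hF] at this; exact Bool.false_ne_true this
  · exfalso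
    obtain ⟨s, hT, _⟩ := hap2T hexp hi
    have := hij1 r s hT
    rw [hap0 hexp hj s] at this; exact Bool.false_ne_true this
  · exfalso
    obtain ⟨s, hT, hF⟩ := hap2T hexp hi
    have := hij2 r (!s) (hap1 hexp hj (!s))
    rw [hF] at this; exact Bool.false_ne_true this
  · rw [hi, hj]

lemma colGreater_of_col_eq {i j c : Fin m} (heq : ∀ r, A r i = A r j)
    (hcg : ColGreater A c j) : ColGreater A c i := by
  constructor
  · intro p hp
    obtain ⟨r, hr⟩ := hp
    rw [heq r] at hr
    exact hcg.1 ⟨r, hr⟩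
  · obtain ⟨r, hr⟩ := hcg.2
    exact ⟨r, by rw [heq r]; exact hr⟩

lemma lt_of_col_eq {i j : Fin m} {r : Fin n} (hr : r ∈ rowSet A i)
    (hji : j ≠ i) (heq : ∀ r', A r' i = A r' j) : i < j := by
  refine hr.2.2 j hji ⟨by rw [← heq r]; exact hr.1, ?_⟩
  intro c hcj hc2 hcg
  have hcg' : ColGreater A c i := colGreater_of_col_eq heq hcg
  by_cases hci : c = i
  · subst hci
    obtain ⟨r', hne⟩ := hcg'.2
    exact hne rfl
  · exact hr.2.1 c hci hc2 hcg'

section both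
variable (hexp : Explains B₁ B₂ A) (h3 : ThreeGamete B₁ B₂)
include hexp

lemma pair_mem {r : Fin n} {c d : Fin m} (h2c : A r c = 2) (h2d : A r d = 2)
    (hne : B₁ r c ≠ B₁ r d) :
    (true, false) ∈ indB B₁ B₂ c d ∧ (false, true) ∈ indB B₁ B₂ c d := by
  have hBc := (hexp r c).2.2 h2c
  have hBd := (hexp r d).2.2 h2d
  cases e1 : B₁ r c <;> cases e2 : B₂ r c <;> cases e3 : B₁ r d <;> cases e4 : B₂ r d <;>
    simp_all <;>
  constructor
  · exact ⟨r, Or.inr ⟨e2, e4⟩⟩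
  · exact ⟨r, Or.inl ⟨e1, e3⟩⟩
  · exact ⟨r, Or.inl ⟨e1, e3⟩⟩
  · exact ⟨r, Or.inr ⟨e2, e4⟩⟩

lemma eqpair_mem {r : Fin n} {c d : Fin m} (h2c : A r c = 2) (h2d : A r d = 2)
    (heq : B₁ r c = B₁ r d) : (true, true) ∈ indB B₁ B₂ c d := by
  have hBc := (hexp r c).2.2 h2c
  have hBd := (hexp r d).2.2 h2d
  cases e1 : B₁ r c <;> cases e2 : B₂ r c <;> cases e3 : B₁ r d <;> cases e4 : B₂ r d <;>
    simp_all
  · exact ⟨r, Or.inr ⟨e2, e4⟩⟩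
  · exact ⟨r, Or.inl ⟨e1, e3⟩⟩

include h3

lemma unequal_transfer {r₁ r₂ : Fin n} {k l : Fin m}
    (h1k : A r₁ k = 2) (h1l : A r₁ l = 2) (h2k : A r₂ k = 2) (h2l : A r₂ l = 2)
    (hne : B₁ r₁ k ≠ B₁ r₁ l) : B₁ r₂ k ≠ B₁ r₂ l := by
  intro heq
  obtain ⟨htf, hft⟩ := pair_mem hexp h1k h1l hne
  have htt := eqpair_mem hexp h2k h2l heq
  refine h3 k l ?_
  intro p hp
  simp only [Set.mem_insert_iff, Set.mem_singleton_iff] at hp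
  rcases hp with rfl | rfl | rfl
  · exact hft
  · exact htf
  · exact htt

lemma ssub_max {i c : Fin m} {r₁ : Fin n}
    (hmax : ∀ c', c' ≠ i → A r₁ c' = 2 → ¬ ColGreater A c' i)
    (hc2 : A r₁ c = 2)
    (hcom : ∃ r s, Hp B₁ B₂ r s c = true ∧ Hp B₁ B₂ r s i = true) :
    Ssub B₁ B₂ c i := by
  by_cases hci : c = i
  · subst hci; exact fun r s h => h
  rcases laminar h3 hcom with h | h
  · exact h
  · intro r s hc
    by_contra hi
    exact hmax c hci hc2 (colGreater_of hexp h hc (bfalse hi))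

end both

lemma not_eq_true' {x : Bool} (h : true = !x) : x = false := by cases x <;> simp_all
lemma not_eq_false' {x : Bool} (h : false = !x) : x = true := by cases x <;> simp_all

section main
variable (hexp : Explains B₁ B₂ A) (h3 : ThreeGamete B₁ B₂)
include hexp h3

/-- Case A: the second row resolves `j` together with `k`. -/
lemma caseA_aux {i j k l : Fin m} {r₁ r₂ : Fin n}
    (hr₁ : r₁ ∈ rowSet A i) (hij : i ≠ j)
    (h1l : A r₁ l = 2) (h1il : B₁ r₁ i ≠ B₁ r₁ l)
    (h2j : A r₂ j = 2) (h2k : A r₂ k = 2) (h2l : A r₂ l = 2)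
    (h2jk : B₁ r₂ j = B₁ r₂ k) (h2kl : B₁ r₂ k ≠ B₁ r₂ l)
    (hsub : Ssub B₁ B₂ i j) : Ssub B₁ B₂ j i := by
  intro r s hjT
  by_contra hine
  have hiF : Hp B₁ B₂ r s i = false := bfalse hine
  have hcg : ColGreater A j i := colGreater_of hexp hsub hjT hiF
  have h1i : A r₁ i = 2 := hr₁.1
  rcases fin3_cases (A r₁ j) with h0 | h1 | h2
  · obtain ⟨s', hs'T, _⟩ := hap2T hexp h1i
    have := hsub r₁ s' hs'T
    rw [hap0 hexp h0 s'] at this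
    exact Bool.false_ne_true this
  · -- A r₁ j = 1
    obtain ⟨s', hs'T, hs'F⟩ := hap2T hexp h1i
    have hlT : Hp B₁ B₂ r₁ (!s') l = true := by
      have h' := res_ne hexp h1i h1l h1il (!s')
      rw [hs'F] at h'
      exact not_eq_false' h'
    have hjT1 : Hp B₁ B₂ r₁ (!s') j = true := hap1 hexp h1 (!s')
    obtain ⟨t, htT, htF⟩ := hap2T hexp h2j
    have hktT : Hp B₁ B₂ r₂ t k = true := (res_eq hexp h2j h2k h2jk t).symm.trans htT
    have hltF : Hp B₁ B₂ r₂ t l = false := by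
      have h' := res_ne hexp h2k h2l h2kl t
      rw [hktT] at h'
      exact not_eq_true' h'
    have hkF2 : Hp B₁ B₂ r₂ (!t) k = false := (res_eq hexp h2j h2k h2jk (!t)).symm.trans htF
    have hlT2 : Hp B₁ B₂ r₂ (!t) l = true := by
      have h' := res_ne hexp h2k h2l h2kl (!t)
      rw [hkF2] at h'
      exact not_eq_false' h'
    have hdisj := disj_of h3 htT hltF hlT2 htF
    have := hdisj r₁ (!s') hjT1
    rw [hlT] at this
    exact absurd this (by decide)
  · exact hr₁.2.1 j hij.symm h2 hcg

/-- Case B: the second row resolves `j` together with `l`; conclude `i < j`. -/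
lemma caseB_aux {i j k l : Fin m} {r₁ r₂ : Fin n}
    (hr₁ : r₁ ∈ rowSet A i) (hr₂ : r₂ ∈ rowSet A j) (hij : i ≠ j)
    (h1k : A r₁ k = 2) (h1l : A r₁ l = 2) (h2k : A r₂ k = 2) (h2l : A r₂ l = 2)
    (h1kl : B₁ r₁ k ≠ B₁ r₁ l) (h2kl : B₁ r₂ k ≠ B₁ r₂ l)
    (h1ik : B₁ r₁ i = B₁ r₁ k) (h2jl : B₁ r₂ j = B₁ r₂ l) : i < j := by
  have h1i : A r₁ i = 2 := hr₁.1
  have h2j : A r₂ j = 2 := hr₂.1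
  obtain ⟨s₁, hs₁T, hs₁F⟩ := hap2T hexp h1i
  have hs₁k : Hp B₁ B₂ r₁ s₁ k = true := (res_eq hexp h1i h1k h1ik s₁).symm.trans hs₁T
  have hs₁kF : Hp B₁ B₂ r₁ (!s₁) k = false := (res_eq hexp h1i h1k h1ik (!s₁)).symm.trans hs₁F
  have h1il : B₁ r₁ i ≠ B₁ r₁ l := by rw [h1ik]; exact h1kl
  have hs₁lT' : Hp B₁ B₂ r₁ (!s₁) l = true := by
    have h' := res_ne hexp h1i h1l h1il (!s₁)
    rw [hs₁F] at h'
    exact not_eq_false' h'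
  obtain ⟨t₁, ht₁T, ht₁F⟩ := hap2T hexp h2j
  have ht₁l : Hp B₁ B₂ r₂ t₁ l = true := (res_eq hexp h2j h2l h2jl t₁).symm.trans ht₁T
  have ht₁lF' : Hp B₁ B₂ r₂ (!t₁) l = false := (res_eq hexp h2j h2l h2jl (!t₁)).symm.trans ht₁F
  have ht₁kF : Hp B₁ B₂ r₂ t₁ k = false := by
    have h' := res_ne hexp h2k h2l h2kl t₁
    rw [ht₁l] at h'
    exact h'
  have ht₁kT' : Hp B₁ B₂ r₂ (!t₁) k = true := by
    have h' := res_ne hexp h2k h2l h2kl (!t₁)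
    rw [ht₁lF'] at h'
    exact h'
  have hlj : Ssub B₁ B₂ l j := ssub_max hexp h3 hr₂.2.1 h2l ⟨r₂, t₁, ht₁l, ht₁T⟩
  have djk : ∀ r s, Hp B₁ B₂ r s j = true → Hp B₁ B₂ r s k = false :=
    disj_of h3 ht₁T ht₁kF ht₁kT' ht₁F
  have hjT1 : Hp B₁ B₂ r₁ (!s₁) j = true := hlj r₁ (!s₁) hs₁lT'
  have h1j : A r₁ j = 2 := by
    rcases fin3_cases (A r₁ j) with h | h | h
    · rw [hap0 hexp h (!s₁)] at hjT1; exact absurd hjT1 (by decide)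
    · exfalso
      have := djk r₁ s₁ (hap1 hexp h s₁)
      rw [hs₁k] at this
      exact absurd this (by decide)
    · exact h
  refine hr₁.2.2 j hij.symm ⟨h1j, ?_⟩
  intro c hcj hc2 hcg
  rcases colGreater_cases hexp h3 hcg with hsubjc | hdisjc
  · have ht₁c : Hp B₁ B₂ r₂ t₁ c = true := hsubjc r₂ t₁ ht₁T
    rcases fin3_cases (A r₂ c) with h | h | h
    · rw [hap0 hexp h t₁] at ht₁c; exact absurd ht₁c (by decide)
    · have hcT' : Hp B₁ B₂ r₂ (!t₁) c = true := hap1 hexp h (!t₁)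
      rcases laminar h3 ⟨r₂, !t₁, hcT', ht₁kT'⟩ with hck | hkc
      · have := hck r₁ (!s₁) (hsubjc r₁ (!s₁) hjT1)
        rw [hs₁kF] at this
        exact absurd this (by decide)
      · have hc1 : Hp B₁ B₂ r₁ s₁ c = true := hkc r₁ s₁ hs₁k
        have hcY : Hp B₁ B₂ r₁ (!s₁) c = true := hsubjc r₁ (!s₁) hjT1
        have := hap2F hexp hc2 hc1
        rw [hcY] at this
        exact absurd this (by decide)
    · exact hr₂.2.1 c hcj h hcg
  · rcases fin3_cases (A r₂ c) with h | h | h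
    · exact not_mem_triple (hcg.1 ⟨r₂, Or.inr (Or.inl ⟨by simpa using h, h2j⟩)⟩)
    · have := hdisjc r₂ t₁ ht₁T
      rw [hap1 hexp h t₁] at this
      exact absurd this (by decide)
    · exact hr₂.2.1 c hcj h hcg

lemma main_aux {i j : Fin m} (hij : i ≠ j) {r₁ r₂ : Fin n}
    (hr₁ : r₁ ∈ rowSet A i) (hr₂ : r₂ ∈ rowSet A j) {k l : Fin m}
    (h1k : A r₁ k = 2) (h1l : A r₁ l = 2) (h2k : A r₂ k = 2) (h2l : A r₂ l = 2)
    (h1kl : B₁ r₁ k ≠ B₁ r₁ l) (h1ik : B₁ r₁ i = B₁ r₁ k) : False := by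
  have h2kl : B₁ r₂ k ≠ B₁ r₂ l := unequal_transfer hexp h3 h1k h1l h2k h2l h1kl
  have h1i : A r₁ i = 2 := hr₁.1
  have h2j : A r₂ j = 2 := hr₂.1
  by_cases hd : B₁ r₂ j = B₁ r₂ k
  · -- CASE A
    obtain ⟨s₁, hs₁T, hs₁F⟩ := hap2T hexp h1i
    have hs₁k : Hp B₁ B₂ r₁ s₁ k = true := (res_eq hexp h1i h1k h1ik s₁).symm.trans hs₁T
    have hki : Ssub B₁ B₂ k i := ssub_max hexp h3 hr₁.2.1 h1k ⟨r₁, s₁, hs₁k, hs₁T⟩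
    obtain ⟨t₁, ht₁T, ht₁F⟩ := hap2T hexp h2j
    have ht₁k : Hp B₁ B₂ r₂ t₁ k = true := (res_eq hexp h2j h2k hd t₁).symm.trans ht₁T
    have hcom : ∃ r s, Hp B₁ B₂ r s i = true ∧ Hp B₁ B₂ r s j = true :=
      ⟨r₂, t₁, hki r₂ t₁ ht₁k, ht₁T⟩
    have h1il : B₁ r₁ i ≠ B₁ r₁ l := by rw [h1ik]; exact h1kl
    have h2jlne : B₁ r₂ j ≠ B₁ r₂ l := by rw [hd]; exact h2kl
    have heq : ∀ r, A r i = A r j := by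
      rcases laminar h3 hcom with hs | hs
      · exact geno_col_eq hexp hs
          (caseA_aux hexp h3 hr₁ hij h1l h1il h2j h2k h2l hd h2kl hs)
      · exact geno_col_eq hexp
          (caseA_aux hexp h3 hr₂ hij.symm h2l h2jlne h1i h1k h1l h1ik h1kl hs) hs
    have hlt1 := lt_of_col_eq hr₁ hij.symm heq
    have hlt2 := lt_of_col_eq hr₂ hij (fun r => (heq r).symm)
    exact absurd hlt2 (lt_asymm hlt1)
  · -- CASE B
    have h2jl : B₁ r₂ j = B₁ r₂ l := by
      cases e1 : B₁ r₂ j <;> cases e2 : B₁ r₂ k <;> cases e3 : B₁ r₂ l <;> simp_all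
    have hlt1 := caseB_aux hexp h3 hr₁ hr₂ hij h1k h1l h2k h2l h1kl h2kl h1ik h2jl
    have hlt2 := caseB_aux hexp h3 hr₂ hr₁ hij.symm h2l h2k h1l h1k
      (fun e => h2kl e.symm) (fun e => h1kl e.symm) h2jl h1ik
    exact absurd hlt2 (lt_asymm hlt1)

end main

end PPaux


/-- Let `B` be a haplotype matrix explaining `A` that satisfies the three gamete
property, let `i ≠ j` be columns, `g₁ ∈ A_i` and `g₂ ∈ A_j` rows of `A`, and `k, l`
columns with `g₁[k] = g₁[l] = 2` and `g₂[k] = g₂[l] = 2`. Then `g₁` is resolved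
equally in columns `k` and `l` by its explaining haplotypes. -/
theorem shared_two_entries_resolved_equally {n m : ℕ} (A : Fin n → Fin m → Fin 3)
    (B₁ B₂ : Fin n → Fin m → Bool) (hexp : Explains B₁ B₂ A) (h3 : ThreeGamete B₁ B₂)
    (i j : Fin m) (hij : i ≠ j) (r₁ r₂ : Fin n)
    (hr₁ : r₁ ∈ rowSet A i) (hr₂ : r₂ ∈ rowSet A j)
    (k l : Fin m) (h1k : A r₁ k = 2) (h1l : A r₁ l = 2)
    (h2k : A r₂ k = 2) (h2l : A r₂ l = 2) :
    B₁ r₁ k = B₁ r₁ l := by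
  by_contra hne
  by_cases hik : B₁ r₁ i = B₁ r₁ k
  · exact PPaux.main_aux hexp h3 hij hr₁ hr₂ h1k h1l h2k h2l hne hik
  · have hil : B₁ r₁ i = B₁ r₁ l := by
      cases e1 : B₁ r₁ i <;> cases e2 : B₁ r₁ k <;> cases e3 : B₁ r₁ l <;> simp_all
    exact PPaux.main_aux hexp h3 hij hr₁ hr₂ h1l h1k h2l h2k (fun e => hne e.symm) hil
end

section
/- Let A be a genotype matrix and let A' be obtained from A by exchanging all 0-entries and 1-entries in every column in which a 1-entry appears in an earlier row than every 0-entry (i.e., the first entry of the column different from 2 equals 1). Then A admits a perfect phylogeny if, and only if, A' admits a directed perfect phylogeny. -/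
/-- In column `j` of `A`, the first entry different from `2` equals `1`. -/
def FirstNonTwoIsOne {n m : ℕ} (A : Fin n → Fin m → Fin 3) (j : Fin m) : Prop :=
  ∃ r : Fin n, A r j = 1 ∧ ∀ r' : Fin n, r' < r → A r' j = 2

/-- Exchange `0`-entries and `1`-entries, keeping `2`-entries. -/
def flipEntry (x : Fin 3) : Fin 3 := if x = 0 then 1 else if x = 1 then 0 else 2

open Classical in
/-- The matrix `A'` obtained from `A` by exchanging all `0`-entries and `1`-entries
in every column in which a `1`-entry appears in an earlier row than every `0`-entry. -/
noncomputable def normalizeCols {n m : ℕ} (A : Fin n → Fin m → Fin 3) : Fin n → Fin m → Fin 3 :=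
  fun r j => if FirstNonTwoIsOne A j then flipEntry (A r j) else A r j


/- ### Auxiliary lemmas -/

private lemma fin3_cases_s4 : ∀ x : Fin 3, x = 0 ∨ x = 1 ∨ x = 2 := by decide

open Classical in
/-- Flip a bool according to whether column `k` gets flipped. -/
noncomputable def gflip {n m : ℕ} (A : Fin n → Fin m → Fin 3) (k : Fin m) (x : Bool) : Bool :=
  if FirstNonTwoIsOne A k then !x else x

/-- Flip the columns of a haplotype matrix according to `normalizeCols`. -/
noncomputable def FB {n m : ℕ} (A : Fin n → Fin m → Fin 3) (B : Fin n → Fin m → Bool) :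
    Fin n → Fin m → Bool :=
  fun r k => gflip A k (B r k)

lemma gflip_invol {n m : ℕ} (A : Fin n → Fin m → Fin 3) (k : Fin m) (x : Bool) :
    gflip A k (gflip A k x) = x := by
  unfold gflip; split <;> simp

lemma gflip_eq_iff {n m : ℕ} (A : Fin n → Fin m → Fin 3) (k : Fin m) {x y : Bool} :
    gflip A k x = y ↔ x = gflip A k y :=
  ⟨fun h => by rw [← h, gflip_invol], fun h => by rw [h, gflip_invol]⟩

lemma normalize_pos {n m : ℕ} {A : Fin n → Fin m → Fin 3} {r : Fin n} {j : Fin m}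
    (hf : FirstNonTwoIsOne A j) : normalizeCols A r j = flipEntry (A r j) := by
  simp only [normalizeCols]; exact if_pos hf

lemma normalize_neg {n m : ℕ} {A : Fin n → Fin m → Fin 3} {r : Fin n} {j : Fin m}
    (hf : ¬ FirstNonTwoIsOne A j) : normalizeCols A r j = A r j := by
  simp only [normalizeCols]; exact if_neg hf

lemma FB_pos {n m : ℕ} {A : Fin n → Fin m → Fin 3} {B : Fin n → Fin m → Bool} {r : Fin n}
    {j : Fin m} (hf : FirstNonTwoIsOne A j) : FB A B r j = !(B r j) := by
  simp only [FB, gflip]; exact if_pos hf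

lemma FB_neg {n m : ℕ} {A : Fin n → Fin m → Fin 3} {B : Fin n → Fin m → Bool} {r : Fin n}
    {j : Fin m} (hf : ¬ FirstNonTwoIsOne A j) : FB A B r j = B r j := by
  simp only [FB, gflip]; exact if_neg hf

private lemma explainsPt (v : Fin 3) (x y : Bool)
    (h : (v = 0 → x = false ∧ y = false) ∧ (v = 1 → x = true ∧ y = true) ∧ (v = 2 → x ≠ y)) :
    (flipEntry v = 0 → (!x) = false ∧ (!y) = false) ∧
    (flipEntry v = 1 → (!x) = true ∧ (!y) = true) ∧
    (flipEntry v = 2 → (!x) ≠ (!y)) := by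
  revert h; rcases fin3_cases_s4 v with hv | hv | hv <;> subst hv <;> revert x y <;> decide

private lemma explainsPt' (v : Fin 3) (x y : Bool)
    (h : (flipEntry v = 0 → x = false ∧ y = false) ∧ (flipEntry v = 1 → x = true ∧ y = true) ∧
      (flipEntry v = 2 → x ≠ y)) :
    (v = 0 → (!x) = false ∧ (!y) = false) ∧
    (v = 1 → (!x) = true ∧ (!y) = true) ∧
    (v = 2 → (!x) ≠ (!y)) := by
  revert h; rcases fin3_cases_s4 v with hv | hv | hv <;> subst hv <;> revert x y <;> decide

lemma explains_FB {n m : ℕ} {A : Fin n → Fin m → Fin 3} {B₁ B₂ : Fin n → Fin m → Bool}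
    (hE : Explains B₁ B₂ A) : Explains (FB A B₁) (FB A B₂) (normalizeCols A) := by
  intro r j
  have h := hE r j
  by_cases hf : FirstNonTwoIsOne A j
  · rw [normalize_pos hf, FB_pos hf, FB_pos hf]
    exact explainsPt (A r j) (B₁ r j) (B₂ r j) h
  · rw [normalize_neg hf, FB_neg hf, FB_neg hf]
    exact h

lemma explains_FB' {n m : ℕ} {A : Fin n → Fin m → Fin 3} {B₁ B₂ : Fin n → Fin m → Bool}
    (hE : Explains B₁ B₂ (normalizeCols A)) : Explains (FB A B₁) (FB A B₂) A := by
  intro r j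
  have h := hE r j
  by_cases hf : FirstNonTwoIsOne A j
  · rw [normalize_pos hf] at h
    rw [FB_pos hf, FB_pos hf]
    exact explainsPt' (A r j) (B₁ r j) (B₂ r j) h
  · rw [normalize_neg hf] at h
    rw [FB_neg hf, FB_neg hf]
    exact h

lemma mem_indB_FB {n m : ℕ} (A : Fin n → Fin m → Fin 3) (B₁ B₂ : Fin n → Fin m → Bool)
    (i j : Fin m) (p : Bool × Bool) :
    p ∈ indB (FB A B₁) (FB A B₂) i j ↔
      (gflip A i p.1, gflip A j p.2) ∈ indB B₁ B₂ i j := by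
  constructor
  · rintro ⟨r, ⟨h1, h2⟩ | ⟨h1, h2⟩⟩
    · exact ⟨r, Or.inl ⟨(gflip_eq_iff A i).mp h1, (gflip_eq_iff A j).mp h2⟩⟩
    · exact ⟨r, Or.inr ⟨(gflip_eq_iff A i).mp h1, (gflip_eq_iff A j).mp h2⟩⟩
  · rintro ⟨r, ⟨h1, h2⟩ | ⟨h1, h2⟩⟩
    · exact ⟨r, Or.inl ⟨by simp only [FB, h1, gflip_invol],
        by simp only [FB, h2, gflip_invol]⟩⟩
    · exact ⟨r, Or.inr ⟨by simp only [FB, h1, gflip_invol],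
        by simp only [FB, h2, gflip_invol]⟩⟩

lemma full_eq_univ :
    ({(false, false), (false, true), (true, false), (true, true)} : Set (Bool × Bool)) =
      Set.univ := by
  ext ⟨a, b⟩
  cases a <;> cases b <;> simp

lemma full_FB_iff {n m : ℕ} (A : Fin n → Fin m → Fin 3) (B₁ B₂ : Fin n → Fin m → Bool)
    (i j : Fin m) :
    indB (FB A B₁) (FB A B₂) i j =
        ({(false, false), (false, true), (true, false), (true, true)} : Set (Bool × Bool)) ↔
      indB B₁ B₂ i j =
        ({(false, false), (false, true), (true, false), (true, true)} : Set (Bool × Bool)) := by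
  rw [full_eq_univ, Set.eq_univ_iff_forall, Set.eq_univ_iff_forall]
  constructor
  · intro h p
    have := (mem_indB_FB A B₁ B₂ i j (gflip A i p.1, gflip A j p.2)).mp
      (h (gflip A i p.1, gflip A j p.2))
    simpa [gflip_invol] using this
  · intro h p
    exact (mem_indB_FB A B₁ B₂ i j p).mpr (h _)

private lemma opp_of_ne_true {a b : Bool} (h : a ≠ b) (ha : a = true) : b = false := by
  subst ha
  cases b with
  | false => rfl
  | true => exact absurd rfl h

lemma normalize_col_struct {n m : ℕ} (A : Fin n → Fin m → Fin 3) (j : Fin m) :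
    (∀ r, normalizeCols A r j = 2) ∨
      ∃ r₀, normalizeCols A r₀ j = 0 ∧ ∀ r, r < r₀ → normalizeCols A r j = 2 := by
  classical
  by_cases hf : FirstNonTwoIsOne A j
  · right
    obtain ⟨r₀, h1, h2⟩ := id hf
    refine ⟨r₀, ?_, fun r hr => ?_⟩
    · rw [normalize_pos hf, h1]; decide
    · rw [normalize_pos hf, h2 r hr]; decide
  · by_cases hs : ∃ r, A r j ≠ 2
    · obtain ⟨r, hr⟩ := hs
      have hne : (Finset.univ.filter fun r => A r j ≠ 2).Nonempty := ⟨r, by simp [hr]⟩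
      set r₀ := (Finset.univ.filter fun r => A r j ≠ 2).min' hne with hr₀def
      have hr₀mem := (Finset.univ.filter fun r => A r j ≠ 2).min'_mem hne
      rw [Finset.mem_filter] at hr₀mem
      have hr₀ : A r₀ j ≠ 2 := hr₀mem.2
      have hearly : ∀ r', r' < r₀ → A r' j = 2 := by
        intro r' hlt
        by_contra hc
        have : r₀ ≤ r' := Finset.min'_le _ _ (by simp [hc])
        exact absurd hlt (not_lt.mpr this)
      rcases fin3_cases_s4 (A r₀ j) with h0 | h1 | h2
      · right
        refine ⟨r₀, ?_, fun r' hlt => ?_⟩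
        · rw [normalize_neg hf, h0]
        · rw [normalize_neg hf, hearly r' hlt]
      · exact absurd ⟨r₀, h1, hearly⟩ hf
      · exact absurd h2 hr₀
    · left
      push_neg at hs
      intro r'
      rw [normalize_neg hf]
      exact hs r'

/-- Key lemma: if every column of `A` is all-`2` or has first non-`2` entry `0`,
then any four-gamete explaining matrix is three-gamete. -/
lemma three_of_four {n m : ℕ} (A : Fin n → Fin m → Fin 3)
    (hcol : ∀ j : Fin m, (∀ r, A r j = 2) ∨
      ∃ r₀, A r₀ j = 0 ∧ ∀ r, r < r₀ → A r j = 2)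
    (B₁ B₂ : Fin n → Fin m → Bool) (hE : Explains B₁ B₂ A) (h4 : FourGamete B₁ B₂) :
    ThreeGamete B₁ B₂ := by
  intro i j hsub
  have h00 : (false, false) ∉ indB B₁ B₂ i j := by
    intro h
    apply h4 i j
    rw [full_eq_univ]
    refine Set.eq_univ_of_forall fun p => ?_
    rcases p with ⟨a, b⟩
    cases a <;> cases b
    · exact h
    · exact hsub (by simp)
    · exact hsub (by simp)
    · exact hsub (by simp)
  have h11 : (true, true) ∈ indB B₁ B₂ i j := hsub (by simp)
  have no00₁ : ∀ r, B₁ r i = false → B₁ r j = true := by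
    intro r h
    cases hc : B₁ r j with
    | true => rfl
    | false => exact absurd ⟨r, Or.inl ⟨h, hc⟩⟩ h00
  have no00₂ : ∀ r, B₂ r i = false → B₂ r j = true := by
    intro r h
    cases hc : B₂ r j with
    | true => rfl
    | false => exact absurd ⟨r, Or.inr ⟨h, hc⟩⟩ h00
  have no00₁' : ∀ r, B₁ r j = false → B₁ r i = true := by
    intro r h
    cases hc : B₁ r i with
    | true => rfl
    | false => exact absurd ⟨r, Or.inl ⟨hc, h⟩⟩ h00
  have no00₂' : ∀ r, B₂ r j = false → B₂ r i = true := by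
    intro r h
    cases hc : B₂ r i with
    | true => rfl
    | false => exact absurd ⟨r, Or.inr ⟨hc, h⟩⟩ h00
  rcases hcol i with hi | ⟨ri, hri0, hriE⟩
  · rcases hcol j with hj | ⟨rj, hrj0, hrjE⟩
    · -- both columns all 2
      obtain ⟨r, hr | hr⟩ := h11
      · have d2i := (hE r i).2.2 (hi r)
        have d2j := (hE r j).2.2 (hj r)
        exact h00 ⟨r, Or.inr ⟨opp_of_ne_true d2i hr.1, opp_of_ne_true d2j hr.2⟩⟩
      · have d2i := (hE r i).2.2 (hi r)
        have d2j := (hE r j).2.2 (hj r)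
        exact h00 ⟨r, Or.inl ⟨opp_of_ne_true (Ne.symm d2i) hr.1,
          opp_of_ne_true (Ne.symm d2j) hr.2⟩⟩
    · -- column i all 2, column j starts with 0 at row rj
      have hb := (hE rj j).1 hrj0
      have t1 := no00₁' rj hb.1
      have t2 := no00₂' rj hb.2
      exact (hE rj i).2.2 (hi rj) (t1.trans t2.symm)
  · rcases hcol j with hj | ⟨rj, hrj0, hrjE⟩
    · -- column j all 2, column i starts with 0 at row ri
      have hb := (hE ri i).1 hri0
      have t1 := no00₁ ri hb.1
      have t2 := no00₂ ri hb.2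
      exact (hE ri j).2.2 (hj ri) (t1.trans t2.symm)
    · -- both columns start with 0
      have hbi := (hE ri i).1 hri0
      have ti1 := no00₁ ri hbi.1
      have ti2 := no00₂ ri hbi.2
      have hAij : A ri j = 1 := by
        rcases fin3_cases_s4 (A ri j) with h | h | h
        · have := ((hE ri j).1 h).1
          rw [ti1] at this
          exact absurd this (by decide)
        · exact h
        · exact absurd (ti1.trans ti2.symm) ((hE ri j).2.2 h)
      have hbj := (hE rj j).1 hrj0
      have tj1 := no00₁' rj hbj.1
      have tj2 := no00₂' rj hbj.2
      have hAji : A rj i = 1 := by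
        rcases fin3_cases_s4 (A rj i) with h | h | h
        · have := ((hE rj i).1 h).1
          rw [tj1] at this
          exact absurd this (by decide)
        · exact h
        · exact absurd (tj1.trans tj2.symm) ((hE rj i).2.2 h)
      rcases lt_trichotomy ri rj with hlt | heq | hlt
      · have := hrjE ri hlt
        rw [hAij] at this
        exact absurd this (by decide)
      · subst heq
        rw [hAij] at hrj0
        exact absurd hrj0 (by decide)
      · have := hriE rj hlt
        rw [hAji] at this
        exact absurd this (by decide)

/-- Let `A'` be obtained from `A` by exchanging all `0`-entries and `1`-entries in
every column in which a `1`-entry appears in an earlier row than every `0`-entry.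
Then `A` admits a perfect phylogeny if, and only if, `A'` admits a directed perfect
phylogeny. -/
theorem pph_iff_dpph_normalize {n m : ℕ} (A : Fin n → Fin m → Fin 3) :
    AdmitsPP A ↔ AdmitsDirectedPP (normalizeCols A) := by
  constructor
  · rintro ⟨B₁, B₂, hE, h4⟩
    refine ⟨FB A B₁, FB A B₂, explains_FB hE, ?_⟩
    have h4' : FourGamete (FB A B₁) (FB A B₂) := by
      intro i j hfull
      exact h4 i j ((full_FB_iff A B₁ B₂ i j).mp hfull)
    exact three_of_four (normalizeCols A) (normalize_col_struct A) _ _ (explains_FB hE) h4'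
  · rintro ⟨B₁, B₂, hE, h3⟩
    refine ⟨FB A B₁, FB A B₂, explains_FB' hE, ?_⟩
    intro i j hfull
    have hfull' := (full_FB_iff A B₁ B₂ i j).mp hfull
    apply h3 i j
    rw [hfull']
    intro p hp
    simp only [Set.mem_insert_iff, Set.mem_singleton_iff] at hp ⊢
    tauto
end

section
/- Let A be an n×m genotype matrix. Then A admits a directed perfect phylogeny if, and only if, the (n+1)×m genotype matrix obtained from A by appending the all-0 genotype as an additional row admits a perfect phylogeny. -/
/-- An `n × m` genotype matrix `A` admits a directed perfect phylogeny if, and only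
if, the `(n+1) × m` genotype matrix obtained from `A` by appending the all-`0`
genotype as an additional row admits a perfect phylogeny. -/
theorem dpph_iff_pph_append_zero_row {n m : ℕ} (A : Fin n → Fin m → Fin 3) :
    AdmitsDirectedPP A ↔ AdmitsPP (Fin.snoc A (fun _ => (0 : Fin 3))) := by
  constructor
  · rintro ⟨B₁, B₂, hE, h3⟩
    refine ⟨Fin.snoc B₁ (fun _ => false), Fin.snoc B₂ (fun _ => false), ?_, ?_⟩
    · intro r
      refine Fin.lastCases ?_ (fun i => ?_) r
      · intro j
        simp [Fin.snoc_last]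
      · intro j
        simpa [Fin.snoc_castSucc] using hE i j
    · intro i j heq
      apply h3 i j
      intro p hp
      have hp' : p ∈ indB (Fin.snoc B₁ (fun _ => false)) (Fin.snoc B₂ (fun _ => false)) i j := by
        rw [heq]
        simp only [Set.mem_insert_iff, Set.mem_singleton_iff] at hp ⊢
        tauto
      obtain ⟨r, hr⟩ := hp'
      refine Fin.lastCases ?_ (fun r' hr => ?_) r hr
      · intro hr
        exfalso
        have hpf : p = (false, false) := by
          rcases hr with ⟨h1, h2⟩ | ⟨h1, h2⟩ <;> simp only [Fin.snoc_last] at h1 h2 <;>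
            exact Prod.ext h1.symm h2.symm
        rw [hpf] at hp
        simp at hp
      · simp only [Fin.snoc_castSucc] at hr
        exact ⟨r', hr⟩
  · rintro ⟨B₁, B₂, hE, h4⟩
    have hl1 : ∀ j, B₁ (Fin.last n) j = false := fun j =>
      ((hE (Fin.last n) j).1 (by simp [Fin.snoc_last])).1
    have hl2 : ∀ j, B₂ (Fin.last n) j = false := fun j =>
      ((hE (Fin.last n) j).1 (by simp [Fin.snoc_last])).2
    refine ⟨fun r => B₁ r.castSucc, fun r => B₂ r.castSucc, fun r => ?_, ?_⟩
    · intro j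
      simpa [Fin.snoc_castSucc] using hE r.castSucc j
    · intro i j hsub
      apply h4 i j
      apply Set.Subset.antisymm
      · rintro ⟨a, b⟩ _
        cases a <;> cases b <;> simp
      · intro p hp
        simp only [Set.mem_insert_iff, Set.mem_singleton_iff] at hp
        have key : ∀ q ∈ ({(false, true), (true, false), (true, true)} : Set (Bool × Bool)),
            q ∈ indB B₁ B₂ i j := by
          intro q hq
          obtain ⟨r, hr⟩ := hsub hq
          exact ⟨r.castSucc, hr⟩
        rcases hp with h | h | h | h
        · exact ⟨Fin.last n, Or.inl ⟨by rw [hl1 i, h], by rw [hl1 j, h]⟩⟩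
        · exact key p (by simp [h])
        · exact key p (by simp [h])
        · exact key p (by simp [h])
end

section
/- If a genotype matrix A has two columns i, j with {01,10,11} ⊆ ind^A(i,j), then A does not admit a directed perfect phylogeny. -/
lemma explainsRow_val {m : ℕ} {h h' : Fin m → Bool} {g : Fin m → Fin 3}
    (he : ExplainsRow h h' g) (k : Fin m) (b : Bool) (hg : g k = boolToFin3 b) :
    h k = b ∧ h' k = b := by
  have := he k
  cases b <;> simp [boolToFin3] at hg <;> tauto

lemma mem_indB_of_mem_indA {n m : ℕ} {B₁ B₂ : Fin n → Fin m → Bool}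
    {A : Fin n → Fin m → Fin 3} (hE : Explains B₁ B₂ A) {i j : Fin m}
    {p : Bool × Bool} (hp : p ∈ indA A i j) : p ∈ indB B₁ B₂ i j := by
  obtain ⟨r, hr⟩ := hp
  rcases hr with ⟨h1, h2⟩ | ⟨h1, h2⟩ | ⟨h1, h2⟩
  · exact ⟨r, Or.inl ⟨(explainsRow_val (hE r) i p.1 h1).1,
      (explainsRow_val (hE r) j p.2 h2).1⟩⟩
  · have hi := explainsRow_val (hE r) i p.1 h1
    have hne := ((hE r) j).2.2 h2
    by_cases hb : B₁ r j = p.2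
    · exact ⟨r, Or.inl ⟨hi.1, hb⟩⟩
    · refine ⟨r, Or.inr ⟨hi.2, ?_⟩⟩
      cases hc : B₁ r j <;> cases hd : B₂ r j <;> simp_all
  · have hj := explainsRow_val (hE r) j p.2 h2
    have hne := ((hE r) i).2.2 h1
    by_cases hb : B₁ r i = p.1
    · exact ⟨r, Or.inl ⟨hb, hj.1⟩⟩
    · refine ⟨r, Or.inr ⟨?_, hj.2⟩⟩
      cases hc : B₁ r i <;> cases hd : B₂ r i <;> simp_all

/-- If a genotype matrix `A` has two columns `i, j` with `{01,10,11} ⊆ ind^A(i,j)`,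
then `A` does not admit a directed perfect phylogeny. -/
theorem not_dpph_of_three_gametes_in_indA {n m : ℕ} (A : Fin n → Fin m → Fin 3)
    (i j : Fin m)
    (h : ({(false, true), (true, false), (true, true)} : Set (Bool × Bool)) ⊆ indA A i j) :
    ¬ AdmitsDirectedPP A := by
  rintro ⟨B₁, B₂, hE, hT⟩
  exact hT i j (fun p hp => mem_indB_of_mem_indA hE (h hp))
end

section
/- Let A be a genotype matrix and B a haplotype matrix explaining A that satisfies the three gamete property. If i, j are columns with 11 ∈ ind^A(i,j), then for every row g of A with g[i] = g[j] = 2 the two rows h, h' of B explaining g satisfy h[i] = h[j] (g is resolved equally in i and j). -/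
/-- Let `B` be a haplotype matrix explaining `A` that satisfies the three gamete
property. If `i, j` are columns with `11 ∈ ind^A(i,j)`, then every row `g` of `A`
with `g[i] = g[j] = 2` is resolved equally in `i` and `j` by its explaining
haplotypes. -/
theorem equal_resolution_of_11 {n m : ℕ} (A : Fin n → Fin m → Fin 3)
    (B₁ B₂ : Fin n → Fin m → Bool) (hexp : Explains B₁ B₂ A) (h3 : ThreeGamete B₁ B₂)
    (i j : Fin m) (hind : ((true, true) : Bool × Bool) ∈ indA A i j)
    (r : Fin n) (hi : A r i = 2) (hj : A r j = 2) :
    B₁ r i = B₁ r j := by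
  -- (true,true) ∈ indB
  have h11 : ((true, true) : Bool × Bool) ∈ indB B₁ B₂ i j := by
    obtain ⟨r', hr'⟩ := hind
    rcases hr' with ⟨h1, h2⟩ | ⟨h1, h2⟩ | ⟨h1, h2⟩
    · exact ⟨r', Or.inl ⟨((hexp r' i).2.1 h1).1, ((hexp r' j).2.1 h2).1⟩⟩
    · have hi1 := (hexp r' i).2.1 h1
      have hj2 := (hexp r' j).2.2 h2
      cases hB : B₁ r' j
      · have : B₂ r' j = true := by
          cases hB2 : B₂ r' j
          · exact absurd (hB.trans hB2.symm) hj2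
          · rfl
        exact ⟨r', Or.inr ⟨hi1.2, this⟩⟩
      · exact ⟨r', Or.inl ⟨hi1.1, hB⟩⟩
    · have hj1 := (hexp r' j).2.1 h2
      have hi2 := (hexp r' i).2.2 h1
      cases hB : B₁ r' i
      · have : B₂ r' i = true := by
          cases hB2 : B₂ r' i
          · exact absurd (hB.trans hB2.symm) hi2
          · rfl
        exact ⟨r', Or.inr ⟨this, hj1.2⟩⟩
      · exact ⟨r', Or.inl ⟨hB, hj1.1⟩⟩
  have hdi := (hexp r i).2.2 hi
  have hdj := (hexp r j).2.2 hj
  by_contra hne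
  apply h3 i j
  intro p hp
  have h01 : ((false, true) : Bool × Bool) ∈ indB B₁ B₂ i j := by
    cases h1 : B₁ r i <;> cases h2 : B₁ r j
    · exact absurd (h1.trans h2.symm) hne
    · exact ⟨r, Or.inl ⟨h1, h2⟩⟩
    · refine ⟨r, Or.inr ⟨?_, ?_⟩⟩
      · cases hB2 : B₂ r i
        · rfl
        · exact absurd (h1.trans hB2.symm) hdi
      · cases hB2 : B₂ r j
        · exact absurd (h2.trans hB2.symm) hdj
        · rfl
    · exact absurd (h1.trans h2.symm) hne
  have h10 : ((true, false) : Bool × Bool) ∈ indB B₁ B₂ i j := by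
    cases h1 : B₁ r i <;> cases h2 : B₁ r j
    · exact absurd (h1.trans h2.symm) hne
    · refine ⟨r, Or.inr ⟨?_, ?_⟩⟩
      · cases hB2 : B₂ r i
        · exact absurd (h1.trans hB2.symm) hdi
        · rfl
      · cases hB2 : B₂ r j
        · rfl
        · exact absurd (h2.trans hB2.symm) hdj
    · exact ⟨r, Or.inl ⟨h1, h2⟩⟩
    · exact absurd (h1.trans h2.symm) hne
  simp only [Set.mem_insert_iff, Set.mem_singleton_iff] at hp
  rcases hp with rfl | rfl | rfl
  · exact h01
  · exact h10
  · exact h11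
end
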